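/- arXiv:2001.04323 — 7 statements merged into one kernel-verified Lean document; each statement's English description precedes it below -/
import Mathlib

section
/- Let b, d : [0,∞) → [0,∞) and A : [0,∞) → ℝ be continuous functions with A(x) ≥ A̲ for all x and some constant A̲ > 0, and suppose b(x₀) > 0 for some x₀ > 0. Define F(λ) := ∫₀^∞ (b(x)/A(x))·exp(∫₀ˣ (λ − d(x'))/A(x') dx') dx for λ ∈ ℝ. Let Λ̲ ≤ Λ̄ be real numbers with F(Λ̄) < ∞. Then for every η > 0 satisfying F(Λ̲) ≤ 1/η ≤ F(Λ̄), there exists a unique λ ∈ [Λ̲, Λ̄] such that F(λ) = 1/η. -/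
open MeasureTheory Set

lemma primitive_contOn {f : ℝ → ℝ} (hf : ContinuousOn f (Ici 0)) :
    ContinuousOn (fun x => ∫ t in (0:ℝ)..x, f t) (Ici 0) := by
  intro x hx
  simp only [mem_Ici] at hx
  have hsub : Icc (0:ℝ) (x+1) ⊆ Ici 0 := Icc_subset_Ici_self
  have hint : IntegrableOn f (uIcc 0 (x+1)) := by
    rw [uIcc_of_le (by linarith)]
    exact (hf.mono hsub).integrableOn_compact isCompact_Icc
  have h := intervalIntegral.continuousOn_primitive_interval hint
  rw [uIcc_of_le (by linarith)] at h
  have := h.continuousWithinAt (⟨hx, by linarith⟩ : x ∈ Icc (0:ℝ) (x+1))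
  exact this.mono_of_mem_nhdsWithin <| Filter.inter_mem self_mem_nhdsWithin
    (mem_nhdsWithin_of_mem_nhds (Iic_mem_nhds (by linarith)))

/-- existence and uniqueness of the effective fitness `Λ(η)`,
defined implicitly by `F(Λ(η)) = 1/η`. -/
theorem eigenvalue_exists_unique
    (b d A : ℝ → ℝ) (Abar : ℝ)
    (hb : ContinuousOn b (Ici 0)) (hd : ContinuousOn d (Ici 0))
    (hA : ContinuousOn A (Ici 0))
    (hbnn : ∀ x ≥ (0:ℝ), 0 ≤ b x) (hdnn : ∀ x ≥ (0:ℝ), 0 ≤ d x)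
    (hAbar : 0 < Abar) (hAge : ∀ x ≥ (0:ℝ), Abar ≤ A x)
    (hx0 : ∃ x₀ > (0:ℝ), 0 < b x₀)
    (F : ℝ → ℝ)
    (hF : ∀ l : ℝ, F l =
      ∫ x in Ioi (0:ℝ), b x / A x * Real.exp (∫ t in (0:ℝ)..x, (l - d t) / A t))
    (Λlow Λhigh : ℝ) (hΛle : Λlow ≤ Λhigh)
    (hFfin : IntegrableOn
      (fun x => b x / A x * Real.exp (∫ t in (0:ℝ)..x, (Λhigh - d t) / A t))
      (Ioi 0)) :
    ∀ η > (0:ℝ), F Λlow ≤ 1 / η → 1 / η ≤ F Λhigh →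
      ∃! l : ℝ, l ∈ Icc Λlow Λhigh ∧ F l = 1 / η := by
  set g : ℝ → ℝ → ℝ := fun l x => ∫ t in (0:ℝ)..x, (l - d t) / A t with hg_def
  set G : ℝ → ℝ → ℝ := fun l x => b x / A x * Real.exp (g l x) with hG_def
  have hApos : ∀ x ∈ Ici (0:ℝ), 0 < A x := fun x hx => lt_of_lt_of_le hAbar (hAge x hx)
  have hAne : ∀ x ∈ Ici (0:ℝ), A x ≠ 0 := fun x hx => (hApos x hx).ne'
  -- continuity of integrands
  have hci : ∀ l : ℝ, ContinuousOn (fun t => (l - d t) / A t) (Ici 0) :=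
    fun l => (continuousOn_const.sub hd).div hA hAne
  have hgc : ∀ l : ℝ, ContinuousOn (g l) (Ici 0) := fun l => primitive_contOn (hci l)
  have hGc : ∀ l : ℝ, ContinuousOn (G l) (Ici 0) := fun l =>
    (hb.div hA hAne).mul (Real.continuous_exp.comp_continuousOn (hgc l))
  have hGmeas : ∀ l : ℝ, AEStronglyMeasurable (G l) (volume.restrict (Ioi 0)) := fun l =>
    ContinuousOn.aestronglyMeasurable ((hGc l).mono Ioi_subset_Ici_self) measurableSet_Ioi
  have hGnn : ∀ l : ℝ, ∀ x ∈ Ici (0:ℝ), 0 ≤ G l x := fun l x hx =>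
    mul_nonneg (div_nonneg (hbnn x hx) (hApos x hx).le) (Real.exp_pos _).le
  -- interval integrability
  have hII : ∀ (l x : ℝ), 0 ≤ x → IntervalIntegrable (fun t => (l - d t) / A t) volume 0 x := by
    intro l x hx
    apply ContinuousOn.intervalIntegrable
    rw [uIcc_of_le hx]
    exact (hci l).mono (Icc_subset_Ici_self)
  -- monotonicity of g in l
  have hgmono : ∀ l₁ l₂ : ℝ, l₁ ≤ l₂ → ∀ x : ℝ, 0 ≤ x → g l₁ x ≤ g l₂ x := by
    intro l₁ l₂ hl x hx
    apply intervalIntegral.integral_mono_on hx (hII l₁ x hx) (hII l₂ x hx)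
    intro t ht
    have hAt : 0 < A t := hApos t ht.1
    gcongr
  have hGmono : ∀ l₁ l₂ : ℝ, l₁ ≤ l₂ → ∀ x ∈ Ici (0:ℝ), G l₁ x ≤ G l₂ x := by
    intro l₁ l₂ hl x hx
    exact mul_le_mul_of_nonneg_left (Real.exp_le_exp.2 (hgmono l₁ l₂ hl x hx))
      (div_nonneg (hbnn x hx) (hApos x hx).le)
  -- integrability for l ≤ Λhigh
  have hbound : ∀ l : ℝ, l ≤ Λhigh → ∀ᵐ x ∂(volume.restrict (Ioi (0:ℝ))),
      ‖G l x‖ ≤ G Λhigh x := by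
    intro l hl
    refine (ae_restrict_iff' measurableSet_Ioi).2 (Filter.Eventually.of_forall ?_)
    intro x hx
    have hx' : x ∈ Ici (0:ℝ) := mem_Ici.2 (le_of_lt hx)
    rw [Real.norm_eq_abs, abs_of_nonneg (hGnn l x hx')]
    exact hGmono l Λhigh hl x hx'
  have hInt : ∀ l : ℝ, l ≤ Λhigh → IntegrableOn (G l) (Ioi 0) := by
    intro l hl
    exact Integrable.mono' hFfin (hGmeas l) (hbound l hl)
  -- decomposition of g
  have hdecomp : ∀ (l x : ℝ), 0 ≤ x →
      g l x = l * (∫ t in (0:ℝ)..x, (A t)⁻¹) - ∫ t in (0:ℝ)..x, d t / A t := by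
    intro l x hx
    have hI1 : IntervalIntegrable (fun t => (A t)⁻¹) volume 0 x := by
      apply ContinuousOn.intervalIntegrable
      rw [uIcc_of_le hx]
      exact (hA.inv₀ hAne).mono Icc_subset_Ici_self
    have hI2 : IntervalIntegrable (fun t => d t / A t) volume 0 x := by
      apply ContinuousOn.intervalIntegrable
      rw [uIcc_of_le hx]
      exact (hd.div hA hAne).mono Icc_subset_Ici_self
    calc g l x = ∫ t in (0:ℝ)..x, (l * (A t)⁻¹ - d t / A t) := by
          apply intervalIntegral.integral_congr
          intro t _
          show (l - d t) / A t = l * (A t)⁻¹ - d t / A t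
          rw [sub_div, div_eq_mul_inv]
      _ = (∫ t in (0:ℝ)..x, l * (A t)⁻¹) - ∫ t in (0:ℝ)..x, d t / A t :=
          intervalIntegral.integral_sub (hI1.const_mul l) hI2
      _ = l * (∫ t in (0:ℝ)..x, (A t)⁻¹) - ∫ t in (0:ℝ)..x, d t / A t := by
          rw [intervalIntegral.integral_const_mul]
  -- continuity of F
  have hFeq : ∀ l : ℝ, F l = ∫ x in Ioi (0:ℝ), G l x := hF
  have hFcont : ContinuousOn F (Icc Λlow Λhigh) := by
    have : ContinuousOn (fun l => ∫ x in Ioi (0:ℝ), G l x) (Icc Λlow Λhigh) := by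
      apply continuousOn_of_dominated (fun l hl => hGmeas l) (fun l hl => hbound l hl.2) hFfin
      refine (ae_restrict_iff' measurableSet_Ioi).2 (Filter.Eventually.of_forall ?_)
      intro x hx
      have hx' : (0:ℝ) ≤ x := le_of_lt hx
      have heq : (fun l => G l x) =
          fun l => b x / A x * Real.exp (l * (∫ t in (0:ℝ)..x, (A t)⁻¹)
            - ∫ t in (0:ℝ)..x, d t / A t) := funext fun l => by
        simp only [hG_def, hdecomp l x hx']
      rw [heq]
      exact (continuous_const.mul (Real.continuous_exp.comp
        ((continuous_id.mul continuous_const).sub continuous_const))).continuousOn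
    exact ContinuousOn.congr this (fun l _ => hFeq l)
  -- strict monotonicity
  have hFstrict : ∀ l₁ l₂ : ℝ, l₁ ∈ Icc Λlow Λhigh → l₂ ∈ Icc Λlow Λhigh → l₁ < l₂ →
      F l₁ < F l₂ := by
    intro l₁ l₂ hl₁ hl₂ hlt
    obtain ⟨x₀, hx₀pos, hbx₀⟩ := hx0
    -- neighborhood where b > 0
    have hev : ∀ᶠ x in nhds x₀, b x ∈ Ioi (0:ℝ) := by
      have h1 : ContinuousWithinAt b (Ici 0) x₀ := hb x₀ (le_of_lt hx₀pos)
      have h2 : nhdsWithin x₀ (Ici 0) = nhds x₀ :=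
        nhdsWithin_eq_nhds.2 (Ici_mem_nhds hx₀pos)
      have := h1 (Ioi_mem_nhds hbx₀)
      rwa [h2] at this
    obtain ⟨ε, hε, hball⟩ := Metric.eventually_nhds_iff.1 hev
    set u : ℝ := max (x₀ - ε/2) (x₀/2) with hu_def
    have hux₀ : u < x₀ := max_lt (by linarith) (by linarith)
    have hupos : 0 < u := lt_of_lt_of_le (by linarith) (le_max_right _ _)
    have hkey : ∀ x ∈ Ioo u x₀, 0 < G l₂ x - G l₁ x := by
      intro x hx
      have hxpos : 0 < x := lt_trans hupos hx.1
      have hxIci : x ∈ Ici (0:ℝ) := hxpos.le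
      have hbx : 0 < b x := by
        apply hball
        rw [Real.dist_eq, abs_of_nonpos (by linarith [hx.2])]
        have : x₀ - ε/2 ≤ u := le_max_left _ _
        linarith [hx.1, hx.2]
      have hcpos : 0 < ∫ t in (0:ℝ)..x, (A t)⁻¹ := by
        apply intervalIntegral.intervalIntegral_pos_of_pos_on
        · apply ContinuousOn.intervalIntegrable
          rw [uIcc_of_le hxpos.le]
          exact (hA.inv₀ hAne).mono Icc_subset_Ici_self
        · intro t ht
          exact inv_pos.2 (hApos t (le_of_lt ht.1))
        · exact hxpos
      have hglt : g l₁ x < g l₂ x := by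
        rw [hdecomp l₁ x hxpos.le, hdecomp l₂ x hxpos.le]
        have : l₁ * (∫ t in (0:ℝ)..x, (A t)⁻¹) < l₂ * (∫ t in (0:ℝ)..x, (A t)⁻¹) :=
          (mul_lt_mul_iff_left₀ hcpos).2 hlt
        linarith
      have hba : 0 < b x / A x := div_pos hbx (hApos x hxIci)
      have : G l₁ x < G l₂ x :=
        (mul_lt_mul_iff_right₀ hba).2 (Real.exp_lt_exp.2 hglt)
      linarith
    have hi₁ := hInt l₁ hl₁.2
    have hi₂ := hInt l₂ hl₂.2
    have hpos : 0 < ∫ x in Ioi (0:ℝ), (G l₂ x - G l₁ x) := by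
      rw [setIntegral_pos_iff_support_of_nonneg_ae]
      · apply lt_of_lt_of_le _ (measure_mono (show Ioo u x₀ ⊆
          Function.support (fun x => G l₂ x - G l₁ x) ∩ Ioi 0 from ?_))
        · rw [Real.volume_Ioo]
          exact ENNReal.ofReal_pos.2 (by linarith)
        · intro x hx
          exact ⟨(hkey x hx).ne', lt_trans hupos hx.1⟩
      · refine (ae_restrict_iff' measurableSet_Ioi).2 (Filter.Eventually.of_forall ?_)
        intro x hx
        exact sub_nonneg.2 (hGmono l₁ l₂ hlt.le x (mem_Ici.2 (le_of_lt hx)))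
      · exact hi₂.sub hi₁
    have hsub : (∫ x in Ioi (0:ℝ), (G l₂ x - G l₁ x)) =
        (∫ x in Ioi (0:ℝ), G l₂ x) - ∫ x in Ioi (0:ℝ), G l₁ x :=
      integral_sub hi₂ hi₁
    rw [hFeq l₁, hFeq l₂]
    rw [hsub] at hpos
    linarith
  -- conclusion
  intro η hη hlow hhigh
  obtain ⟨l, hl, hFl⟩ := intermediate_value_Icc hΛle hFcont ⟨hlow, hhigh⟩
  refine ⟨l, ⟨hl, hFl⟩, ?_⟩
  rintro l' ⟨hl', hFl'⟩
  rcases lt_trichotomy l' l with h | h | h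
  · exact absurd (hFstrict l' l hl' hl h) (by rw [hFl, hFl']; exact lt_irrefl _)
  · exact h
  · exact absurd (hFstrict l l' hl hl' h) (by rw [hFl, hFl']; exact lt_irrefl _)
end

section
/- Let b, d : [0,∞) → [0,∞) and A : [0,∞) → ℝ be continuous with A(x) ≥ A̲ for all x and some constant A̲ > 0. Define 𝒜(x) := ∫₀ˣ 1/A(x') dx', f(x,λ) := (b(x)/A(x))·exp(∫₀ˣ (λ − d(x'))/A(x') dx'), and F(λ) := ∫₀^∞ f(x,λ) dx. Suppose F(λ̄) < ∞ for some λ̄ ∈ ℝ. Then for every λ < λ̄, F is twice differentiable at λ with F'(λ) = ∫₀^∞ 𝒜(x)·f(x,λ) dx and F''(λ) = ∫₀^∞ 𝒜(x)²·f(x,λ) dx, and the log-convexity inequality F'(λ)² ≤ F(λ)·F''(λ) holds, i.e. (∂_λF)² − F·∂²_λF ≤ 0. -/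
open MeasureTheory Set

/-- Elementary bound: `t * exp (-(s*t)) ≤ 1/s` for `t ≥ 0`, `s > 0`. -/
lemma texp_le (t s : ℝ) (ht : 0 ≤ t) (hs : 0 < s) : t * Real.exp (-(s * t)) ≤ 1 / s := by
  have h := Real.add_one_le_exp (s * t)
  have hE := Real.exp_pos (s * t)
  rw [Real.exp_neg, ← div_eq_mul_inv, div_le_div_iff₀ hE hs]
  nlinarith

set_option maxHeartbeats 1000000 in
/-- differentiability of `F` under the integral sign and the
log-convexity inequality `(F')² ≤ F·F''`. -/
theorem F_log_convex
    (b d A : ℝ → ℝ) (Abar : ℝ)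
    (hb : ContinuousOn b (Ici 0)) (hd : ContinuousOn d (Ici 0))
    (hA : ContinuousOn A (Ici 0))
    (hbnn : ∀ x ≥ (0:ℝ), 0 ≤ b x) (hdnn : ∀ x ≥ (0:ℝ), 0 ≤ d x)
    (hAbar : 0 < Abar) (hAge : ∀ x ≥ (0:ℝ), Abar ≤ A x)
    (calA : ℝ → ℝ) (hcalA : ∀ x : ℝ, calA x = ∫ t in (0:ℝ)..x, 1 / A t)
    (f : ℝ → ℝ → ℝ)
    (hf : ∀ x l : ℝ, f x l = b x / A x * Real.exp (∫ t in (0:ℝ)..x, (l - d t) / A t))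
    (F : ℝ → ℝ) (hF : ∀ l : ℝ, F l = ∫ x in Ioi (0:ℝ), f x l)
    (lamBar : ℝ) (hfin : IntegrableOn (fun x => f x lamBar) (Ioi 0)) :
    ∀ l < lamBar,
      HasDerivAt F (∫ x in Ioi (0:ℝ), calA x * f x l) l ∧
      HasDerivAt (deriv F) (∫ x in Ioi (0:ℝ), calA x ^ 2 * f x l) l ∧
      (∫ x in Ioi (0:ℝ), calA x * f x l) ^ 2 ≤
        F l * ∫ x in Ioi (0:ℝ), calA x ^ 2 * f x l := by
  have hAne : ∀ x ∈ Ici (0:ℝ), A x ≠ 0 := fun x hx => (lt_of_lt_of_le hAbar (hAge x hx)).ne'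
  have hApos : ∀ x ≥ (0:ℝ), 0 < A x := fun x hx => lt_of_lt_of_le hAbar (hAge x hx)
  -- interval integrability of relevant integrands
  have hsubIcc : ∀ x : ℝ, 0 ≤ x → uIcc (0:ℝ) x ⊆ Ici 0 := by
    intro x hx; rw [uIcc_of_le hx]; exact Icc_subset_Ici_self
  have honeCont : ContinuousOn (fun t => 1 / A t) (Ici 0) :=
    continuousOn_const.div hA hAne
  have honeInt : ∀ x : ℝ, 0 ≤ x → IntervalIntegrable (fun t => 1 / A t) volume 0 x :=
    fun x hx => (honeCont.mono (hsubIcc x hx)).intervalIntegrable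
  have hgCont : ∀ l' : ℝ, ContinuousOn (fun t => (l' - d t) / A t) (Ici 0) :=
    fun l' => (continuousOn_const.sub hd).div hA hAne
  have hgInt : ∀ (l' x : ℝ), 0 ≤ x → IntervalIntegrable (fun t => (l' - d t) / A t) volume 0 x :=
    fun l' x hx => ((hgCont l').mono (hsubIcc x hx)).intervalIntegrable
  -- the key splitting identity
  have hsplit : ∀ x : ℝ, 0 ≤ x → ∀ l' : ℝ,
      f x l' = f x lamBar * Real.exp ((l' - lamBar) * calA x) := by
    intro x hx l'
    have heq : ∀ t : ℝ, (l' - d t) / A t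
        = (lamBar - d t) / A t + (l' - lamBar) * (1 / A t) := by
      intro t
      rw [mul_one_div, ← add_div]
      ring_nf
    have h1 : (∫ t in (0:ℝ)..x, (l' - d t) / A t)
        = (∫ t in (0:ℝ)..x, (lamBar - d t) / A t) + (l' - lamBar) * calA x := by
      rw [intervalIntegral.integral_congr (g := fun t =>
          (lamBar - d t) / A t + (l' - lamBar) * (1 / A t)) (fun t _ => heq t),
        intervalIntegral.integral_add (hgInt lamBar x hx)
          ((honeInt x hx).const_mul _),
        intervalIntegral.integral_const_mul, hcalA]
    rw [hf, hf, h1, Real.exp_add]; ring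
  -- nonnegativity of f and calA on [0,∞)
  have hfnn : ∀ x : ℝ, 0 ≤ x → ∀ l' : ℝ, 0 ≤ f x l' := by
    intro x hx l'
    rw [hf]
    exact mul_nonneg (div_nonneg (hbnn x hx) (hApos x hx).le) (Real.exp_pos _).le
  have hcalAnn : ∀ x : ℝ, 0 ≤ x → 0 ≤ calA x := by
    intro x hx
    rw [hcalA]
    exact intervalIntegral.integral_nonneg hx
      (fun t ht => div_nonneg zero_le_one (hApos t ht.1).le)
  -- pointwise derivative in l'
  have hderiv : ∀ x : ℝ, 0 ≤ x → ∀ l' : ℝ,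
      HasDerivAt (fun u => f x u) (calA x * f x l') l' := by
    intro x hx l'
    have h1 : HasDerivAt (fun u : ℝ => (u - lamBar) * calA x) (calA x) l' := by
      simpa using ((hasDerivAt_id l').sub_const lamBar).mul_const (calA x)
    have h2 := (h1.exp).const_mul (f x lamBar)
    have h3 : (fun u : ℝ => f x lamBar * Real.exp ((u - lamBar) * calA x))
        = fun u => f x u := by
      funext u; exact (hsplit x hx u).symm
    rw [h3] at h2
    refine h2.congr_deriv ?_
    rw [hsplit x hx l']; ring
  -- continuity / measurability on Ioi 0
  have hprimCont : ∀ g : ℝ → ℝ, ContinuousOn g (Ici 0) →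
      ContinuousOn (fun x => ∫ t in (0:ℝ)..x, g t) (Ioi 0) := by
    intro g hg x0 hx0
    have hx0' : (0:ℝ) < x0 := hx0
    have hInt : IntervalIntegrable g volume 0 (x0 + 1) :=
      (hg.mono (hsubIcc _ (by linarith))).intervalIntegrable
    have hc : ContinuousOn (fun x => ∫ t in (0:ℝ)..x, g t) (uIcc 0 (x0 + 1)) :=
      intervalIntegral.continuousOn_primitive_interval' hInt left_mem_uIcc
    have hmem : x0 ∈ uIcc (0:ℝ) (x0 + 1) := by
      rw [uIcc_of_le (by linarith)]; exact ⟨by linarith, by linarith⟩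
    have hnh : uIcc (0:ℝ) (x0 + 1) ∈ nhds x0 := by
      rw [uIcc_of_le (by linarith)]
      exact Icc_mem_nhds hx0' (by linarith)
    exact (hc x0 hmem).mono_of_mem_nhdsWithin (mem_nhdsWithin_of_mem_nhds hnh)
  have hcalACont : ContinuousOn calA (Ioi 0) := by
    have := hprimCont (fun t => 1 / A t) honeCont
    intro x hx
    have h2 : ∀ y ∈ Ioi (0:ℝ), calA y = ∫ t in (0:ℝ)..y, 1 / A t := fun y _ => hcalA y
    exact (continuousOn_congr h2).2 this x hx
  have hfCont : ∀ l' : ℝ, ContinuousOn (fun x => f x l') (Ioi 0) := by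
    intro l'
    have h1 : ContinuousOn (fun x => b x / A x *
        Real.exp (∫ t in (0:ℝ)..x, (l' - d t) / A t)) (Ioi 0) := by
      refine ContinuousOn.mul ?_ ?_
      · exact ((hb.div hA hAne).mono Ioi_subset_Ici_self)
      · exact (Real.continuous_exp.comp_continuousOn (hprimCont _ (hgCont l')))
    exact (continuousOn_congr (fun x _ => hf x l')).2 h1
  have hfMeas : ∀ l' : ℝ, AEStronglyMeasurable (fun x => f x l')
      (volume.restrict (Ioi 0)) :=
    fun l' => (hfCont l').aestronglyMeasurable measurableSet_Ioi
  have hcalAfMeas : ∀ l' : ℝ, AEStronglyMeasurable (fun x => calA x * f x l')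
      (volume.restrict (Ioi 0)) :=
    fun l' => (hcalACont.mul (hfCont l')).aestronglyMeasurable measurableSet_Ioi
  have hcalA2fMeas : ∀ l' : ℝ, AEStronglyMeasurable (fun x => calA x ^ 2 * f x l')
      (volume.restrict (Ioi 0)) :=
    fun l' => ((hcalACont.pow 2).mul (hfCont l')).aestronglyMeasurable measurableSet_Ioi
  -- integrability of f (·, l') for l' ≤ lamBar
  have hIntf : ∀ l' : ℝ, l' ≤ lamBar → Integrable (fun x => f x l')
      (volume.restrict (Ioi 0)) := by
    intro l' hl'
    refine Integrable.mono hfin (hfMeas l') ?_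
    rw [ae_restrict_iff' measurableSet_Ioi]
    filter_upwards with x hx
    have hx0 : (0:ℝ) ≤ x := le_of_lt hx
    rw [Real.norm_of_nonneg (hfnn x hx0 l'), Real.norm_of_nonneg (hfnn x hx0 lamBar),
      hsplit x hx0 l']
    have : Real.exp ((l' - lamBar) * calA x) ≤ 1 := by
      rw [Real.exp_le_one_iff]
      exact mul_nonpos_of_nonpos_of_nonneg (by linarith) (hcalAnn x hx0)
    nlinarith [hfnn x hx0 lamBar]
  -- the generic bound used for domination
  have hboundpt : ∀ (δ : ℝ), 0 < δ → ∀ x : ℝ, 0 ≤ x → ∀ l' : ℝ, l' - lamBar ≤ -δ →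
      calA x * f x l' ≤ (1 / δ) * f x lamBar := by
    intro δ hδ x hx l' hl'
    rw [hsplit x hx l']
    have hE : Real.exp ((l' - lamBar) * calA x) ≤ Real.exp (-(δ * calA x)) := by
      apply Real.exp_le_exp.2
      nlinarith [hcalAnn x hx]
    have h1 : calA x * Real.exp ((l' - lamBar) * calA x) ≤ 1 / δ := by
      calc calA x * Real.exp ((l' - lamBar) * calA x)
          ≤ calA x * Real.exp (-(δ * calA x)) :=
            mul_le_mul_of_nonneg_left hE (hcalAnn x hx)
        _ ≤ 1 / δ := texp_le _ _ (hcalAnn x hx) hδ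
    nlinarith [hfnn x hx lamBar, Real.exp_pos ((l' - lamBar) * calA x), hcalAnn x hx]
  -- first derivative, for every l' < lamBar
  have key : ∀ l' : ℝ, l' < lamBar →
      Integrable (fun x => calA x * f x l') (volume.restrict (Ioi 0)) ∧
      HasDerivAt F (∫ x in Ioi (0:ℝ), calA x * f x l') l' := by
    intro l₀ hl₀
    set δ : ℝ := (lamBar - l₀) / 2 with hδdef
    have hδ : 0 < δ := by simp only [hδdef]; linarith
    have H := hasDerivAt_integral_of_dominated_loc_of_deriv_le (μ := volume.restrict (Ioi 0))
      (F := fun u x => f x u) (F' := fun u x => calA x * f x u)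
      (x₀ := l₀) (s := Metric.ball l₀ δ) (bound := fun x => (1 / δ) * f x lamBar) (Metric.ball_mem_nhds l₀ hδ)
      (Filter.Eventually.of_forall fun u => hfMeas u)
      (hIntf l₀ hl₀.le) (hcalAfMeas l₀) ?_ (hfin.const_mul _) ?_
    · refine ⟨H.1, H.2.congr_of_eventuallyEq ?_⟩
      filter_upwards with u
      exact hF u
    · rw [ae_restrict_iff' measurableSet_Ioi]
      filter_upwards with x hx
      intro u hu
      have hx0 : (0:ℝ) ≤ x := le_of_lt hx
      have hu' : u - lamBar ≤ -δ := by
        have := abs_lt.1 (mem_ball_iff_norm.1 hu)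
        simp only [hδdef] at this ⊢
        linarith [this.2]
      rw [Real.norm_of_nonneg (mul_nonneg (hcalAnn x hx0) (hfnn x hx0 u))]
      exact hboundpt δ hδ x hx0 u hu'
    · rw [ae_restrict_iff' measurableSet_Ioi]
      filter_upwards with x hx
      intro u _
      exact hderiv x (le_of_lt hx) u
  -- second derivative of the weighted integral, for every l' < lamBar
  have key2 : ∀ l' : ℝ, l' < lamBar →
      Integrable (fun x => calA x ^ 2 * f x l') (volume.restrict (Ioi 0)) ∧
      HasDerivAt (fun u => ∫ x in Ioi (0:ℝ), calA x * f x u)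
        (∫ x in Ioi (0:ℝ), calA x ^ 2 * f x l') l' := by
    intro l₀ hl₀
    set δ : ℝ := (lamBar - l₀) / 2 with hδdef
    have hδ : 0 < δ := by simp only [hδdef]; linarith
    have hδ2 : 0 < δ / 2 := by linarith
    -- bound: calA x ^ 2 * f x u ≤ (1/(δ/2))^2 * f x lamBar for u ∈ ball l₀ δ
    have hb2 : ∀ x : ℝ, 0 ≤ x → ∀ u : ℝ, u - lamBar ≤ -δ →
        calA x ^ 2 * f x u ≤ (1 / (δ / 2))^2 * f x lamBar := by
      intro x hx u hu
      rw [hsplit x hx u]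
      have hE : Real.exp ((u - lamBar) * calA x) ≤ Real.exp (-(δ * calA x)) := by
        apply Real.exp_le_exp.2
        nlinarith [hcalAnn x hx]
      have hsq : Real.exp (-(δ * calA x)) = Real.exp (-(δ / 2 * calA x)) ^ 2 := by
        rw [sq, ← Real.exp_add]; ring_nf
      have h1 : calA x * Real.exp (-(δ / 2 * calA x)) ≤ 1 / (δ / 2) :=
        texp_le _ _ (hcalAnn x hx) hδ2
      have h2 : calA x ^ 2 * Real.exp (-(δ * calA x)) ≤ (1 / (δ / 2))^2 := by
        rw [hsq]
        have := mul_le_mul h1 h1 (mul_nonneg (hcalAnn x hx) (Real.exp_pos _).le)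
          (by positivity)
        calc calA x ^ 2 * Real.exp (-(δ / 2 * calA x)) ^ 2
            = (calA x * Real.exp (-(δ / 2 * calA x))) *
              (calA x * Real.exp (-(δ / 2 * calA x))) := by ring
          _ ≤ (1 / (δ / 2)) * (1 / (δ / 2)) := this
          _ = (1 / (δ / 2))^2 := (sq _).symm
      have h3 : calA x ^ 2 * Real.exp ((u - lamBar) * calA x) ≤ (1 / (δ / 2))^2 :=
        le_trans (mul_le_mul_of_nonneg_left hE (sq_nonneg _)) h2
      calc calA x ^ 2 * (f x lamBar * Real.exp ((u - lamBar) * calA x))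
          = (calA x ^ 2 * Real.exp ((u - lamBar) * calA x)) * f x lamBar := by ring
        _ ≤ (1 / (δ / 2))^2 * f x lamBar :=
            mul_le_mul_of_nonneg_right h3 (hfnn x hx lamBar)
    have H := hasDerivAt_integral_of_dominated_loc_of_deriv_le (μ := volume.restrict (Ioi 0))
      (F := fun u x => calA x * f x u) (F' := fun u x => calA x ^ 2 * f x u)
      (x₀ := l₀) (s := Metric.ball l₀ δ) (bound := fun x => (1 / (δ / 2))^2 * f x lamBar) (Metric.ball_mem_nhds l₀ hδ)
      (Filter.Eventually.of_forall fun u => hcalAfMeas u)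
      (key l₀ hl₀).1 (hcalA2fMeas l₀) ?_ (hfin.const_mul _) ?_
    · exact ⟨H.1, H.2⟩
    · rw [ae_restrict_iff' measurableSet_Ioi]
      filter_upwards with x hx
      intro u hu
      have hx0 : (0:ℝ) ≤ x := le_of_lt hx
      have hu' : u - lamBar ≤ -δ := by
        have := abs_lt.1 (mem_ball_iff_norm.1 hu)
        simp only [hδdef] at this ⊢
        linarith [this.2]
      rw [Real.norm_of_nonneg (mul_nonneg (sq_nonneg _) (hfnn x hx0 u))]
      exact hb2 x hx0 u hu'
    · rw [ae_restrict_iff' measurableSet_Ioi]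
      filter_upwards with x hx
      intro u _
      have h := (hderiv x (le_of_lt hx) u).const_mul (calA x)
      refine h.congr_deriv ?_
      ring
  -- now fix l < lamBar
  intro l hl
  obtain ⟨hI1, hD1⟩ := key l hl
  obtain ⟨hI2, hD2⟩ := key2 l hl
  have hIl : Integrable (fun x => f x l) (volume.restrict (Ioi 0)) := hIntf l hl.le
  refine ⟨hD1, ?_, ?_⟩
  · -- second derivative of F
    refine hD2.congr_of_eventuallyEq ?_
    filter_upwards [Iio_mem_nhds hl] with u hu
    exact (key u hu).2.deriv
  · -- Cauchy–Schwarz via the discriminant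
    have hquad : ∀ t : ℝ, 0 ≤ (∫ x in Ioi (0:ℝ), f x l) * (t * t)
        + (2 * ∫ x in Ioi (0:ℝ), calA x * f x l) * t
        + ∫ x in Ioi (0:ℝ), calA x ^ 2 * f x l := by
      intro t
      have hIa : Integrable (fun x => (2 * t) * (calA x * f x l) + calA x ^ 2 * f x l)
          (volume.restrict (Ioi 0)) := (hI1.const_mul (2 * t)).add hI2
      have hIb : Integrable (fun x => (t * t) * f x l) (volume.restrict (Ioi 0)) :=
        hIl.const_mul (t * t)
      have e2 : (∫ x in Ioi (0:ℝ), ((2 * t) * (calA x * f x l) + calA x ^ 2 * f x l))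
          = (2 * t) * (∫ x in Ioi (0:ℝ), calA x * f x l)
            + ∫ x in Ioi (0:ℝ), calA x ^ 2 * f x l := by
        rw [integral_add (hI1.const_mul (2 * t)) hI2, integral_const_mul]
      have e1 : (∫ x in Ioi (0:ℝ), ((t * t) * f x l
            + ((2 * t) * (calA x * f x l) + calA x ^ 2 * f x l)))
          = (t * t) * (∫ x in Ioi (0:ℝ), f x l)
            + ((2 * t) * (∫ x in Ioi (0:ℝ), calA x * f x l)
              + ∫ x in Ioi (0:ℝ), calA x ^ 2 * f x l) := by
        rw [integral_add hIb hIa, e2, integral_const_mul]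
      have hnn : 0 ≤ ∫ x in Ioi (0:ℝ), ((t * t) * f x l
          + ((2 * t) * (calA x * f x l) + calA x ^ 2 * f x l)) := by
        apply setIntegral_nonneg measurableSet_Ioi
        intro x hx
        have hx0 : (0:ℝ) ≤ x := le_of_lt hx
        have heq : (t * t) * f x l + ((2 * t) * (calA x * f x l) + calA x ^ 2 * f x l)
            = (t + calA x)^2 * f x l := by ring
        rw [heq]
        exact mul_nonneg (sq_nonneg _) (hfnn x hx0 l)
      rw [e1] at hnn
      linarith
    have hdisc := discrim_le_zero hquad
    rw [discrim] at hdisc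
    rw [hF l]
    nlinarith [hdisc]
end

section
/- Let F : ℝ → ℝ be twice differentiable, let I ⊆ (0, η̄] be an interval with η̄ > 0, and let Λ : I → ℝ be twice differentiable with F(Λ(η)) = 1/η for all η ∈ I. Assume there are constants L > 0 and δ₀ > 0 such that for all η ∈ I: 0 < F'(Λ(η)) ≤ L and F'(Λ(η))² − F(Λ(η))·F''(Λ(η)) ≤ −δ₀. Then for every η ∈ I: Λ''(η) + Λ'(η)/η ≤ −δ₀/(L³·η̄³); in particular there exists δ > 0 with Λ''(η) + Λ'(η)/η ≤ −δ on I. -/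
open Set

/-- the strengthened concavity estimate (Lemma 5.1):
if `0 < F'(Λ(η)) ≤ L` and `F'(Λ(η))² − F(Λ(η))·F''(Λ(η)) ≤ −δ₀` on the
interval `I ⊆ (0, η̄]`, then `Λ''(η) + Λ'(η)/η ≤ −δ₀/(L³·η̄³)` on `I`. -/
theorem fitness_concavity_strong
    (F Λ Λ' Λ'' : ℝ → ℝ) (ηbar : ℝ) (hηbar : 0 < ηbar)
    (I : Set ℝ) (hIinterval : I.OrdConnected)
    (hInontriv : ∃ a ∈ I, ∃ b ∈ I, a < b)
    (hIsub : I ⊆ Ioc 0 ηbar)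
    (hF : ∀ x : ℝ, DifferentiableAt ℝ F x)
    (hF' : ∀ x : ℝ, DifferentiableAt ℝ (deriv F) x)
    (hΛ : ∀ η ∈ I, HasDerivAt Λ (Λ' η) η)
    (hΛ' : ∀ η ∈ I, HasDerivAt Λ' (Λ'' η) η)
    (hrel : ∀ η ∈ I, F (Λ η) = 1 / η)
    (L δ₀ : ℝ) (hL : 0 < L) (hδ₀ : 0 < δ₀)
    (hF'pos : ∀ η ∈ I, 0 < deriv F (Λ η))
    (hF'le : ∀ η ∈ I, deriv F (Λ η) ≤ L)
    (hconc : ∀ η ∈ I,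
      (deriv F (Λ η)) ^ 2 - F (Λ η) * deriv (deriv F) (Λ η) ≤ -δ₀) :
    (∀ η ∈ I, Λ'' η + Λ' η / η ≤ -δ₀ / (L ^ 3 * ηbar ^ 3)) ∧
    ∃ δ > (0:ℝ), ∀ η ∈ I, Λ'' η + Λ' η / η ≤ -δ := by
  obtain ⟨a, ha, b, hb, hab⟩ := hInontriv
  have hconv : Convex ℝ I := convex_iff_ordConnected.mpr hIinterval
  have hintnonempty : (interior I).Nonempty := by
    have h1 : Ioo a b ⊆ I := fun x hx => hIinterval.out ha hb ⟨le_of_lt hx.1, le_of_lt hx.2⟩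
    have h2 : Ioo a b ⊆ interior I := isOpen_Ioo.subset_interior_iff.mpr h1
    exact ⟨(a + b) / 2, h2 ⟨by linarith, by linarith⟩⟩
  have hud : ∀ η ∈ I, UniqueDiffWithinAt ℝ I η := fun η hη =>
    uniqueDiffWithinAt_convex hconv hintnonempty (subset_closure hη)
  -- first derivative identity
  have heq1 : ∀ η ∈ I, deriv F (Λ η) * Λ' η = -(η ^ 2)⁻¹ := by
    intro η hη
    have hη0 : 0 < η := (hIsub hη).1
    have hc : HasDerivAt (fun x => F (Λ x)) (deriv F (Λ η) * Λ' η) η :=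
      ((hF (Λ η)).hasDerivAt).comp η (hΛ η hη)
    have hw : HasDerivWithinAt (fun x : ℝ => x⁻¹) (deriv F (Λ η) * Λ' η) I η := by
      refine (hc.hasDerivWithinAt).congr (fun x hx => ?_) ?_
      · rw [hrel x hx, one_div]
      · rw [hrel η hη, one_div]
    have hw2 : HasDerivWithinAt (fun x : ℝ => x⁻¹) (-(η ^ 2)⁻¹) I η :=
      (hasDerivAt_inv (ne_of_gt hη0)).hasDerivWithinAt
    exact UniqueDiffWithinAt.eq_deriv I (hud η hη) hw hw2
  -- second derivative identity
  have heq2 : ∀ η ∈ I,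
      deriv (deriv F) (Λ η) * Λ' η * Λ' η + deriv F (Λ η) * Λ'' η
        = 2 * η / (η ^ 2) ^ 2 := by
    intro η hη
    have hη0 : 0 < η := (hIsub hη).1
    have hc : HasDerivAt (fun x => deriv F (Λ x) * Λ' x)
        (deriv (deriv F) (Λ η) * Λ' η * Λ' η + deriv F (Λ η) * Λ'' η) η :=
      (((hF' (Λ η)).hasDerivAt).comp η (hΛ η hη)).mul (hΛ' η hη)
    have hw : HasDerivWithinAt (fun x : ℝ => -(x ^ 2)⁻¹)
        (deriv (deriv F) (Λ η) * Λ' η * Λ' η + deriv F (Λ η) * Λ'' η) I η := by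
      refine (hc.hasDerivWithinAt).congr (fun x hx => (heq1 x hx).symm)
        (heq1 η hη).symm
    have hp : HasDerivAt (fun x : ℝ => (x ^ 2)⁻¹)
        (-(2 * η) / ((η ^ 2) ^ 2)) η := by
      have := (hasDerivAt_pow 2 η).inv (pow_ne_zero 2 (ne_of_gt hη0))
      refine this.congr_deriv ?_
      push_cast
      ring
    have hw2 : HasDerivWithinAt (fun x : ℝ => -(x ^ 2)⁻¹)
        (2 * η / (η ^ 2) ^ 2) I η := by
      have := hp.neg.hasDerivWithinAt (s := I)
      refine this.congr_deriv ?_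
      ring
    exact UniqueDiffWithinAt.eq_deriv I (hud η hη) hw hw2
  have main : ∀ η ∈ I, Λ'' η + Λ' η / η ≤ -δ₀ / (L ^ 3 * ηbar ^ 3) := by
    intro η hη
    have hη0 : 0 < η := (hIsub hη).1
    have hηle : η ≤ ηbar := (hIsub hη).2
    set A := deriv F (Λ η) with hA
    set B := deriv (deriv F) (Λ η) with hB
    have hApos : 0 < A := hF'pos η hη
    have hAle : A ≤ L := hF'le η hη
    have e1 : A * Λ' η * η ^ 2 = -1 := by
      have := heq1 η hη
      field_simp at this ⊢
      linarith
    have e2 : B * Λ' η ^ 2 * η ^ 3 + A * Λ'' η * η ^ 3 = 2 := by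
      have := heq2 η hη
      field_simp at this ⊢
      nlinarith [this]
    have hc : A ^ 2 - (1 / η) * B ≤ -δ₀ := by
      have := hconc η hη
      rw [hrel η hη] at this
      linarith
    have key : (Λ'' η + Λ' η / η) * (η ^ 4 * A ^ 3) = η * A ^ 2 - B := by
      have hdiv : Λ' η / η * η = Λ' η := div_mul_cancel₀ _ hη0.ne'
      linear_combination (η * A ^ 2) * e2 +
        (η * A ^ 2 - B * (A * Λ' η * η ^ 2 - 1)) * e1 + (η ^ 3 * A ^ 3) * hdiv
    have hnum : η * A ^ 2 - B ≤ -(η * δ₀) := by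
      have h := mul_le_mul_of_nonneg_left hc (le_of_lt hη0)
      have h2 : η * (A ^ 2 - 1 / η * B) = η * A ^ 2 - B := by
        field_simp
      nlinarith [h, h2]
    have hden : 0 < η ^ 4 * A ^ 3 := by positivity
    have step1 : Λ'' η + Λ' η / η ≤ -(η * δ₀) / (η ^ 4 * A ^ 3) := by
      rw [le_div_iff₀ hden]
      calc (Λ'' η + Λ' η / η) * (η ^ 4 * A ^ 3) = η * A ^ 2 - B := key
        _ ≤ -(η * δ₀) := hnum
    have step2 : -(η * δ₀) / (η ^ 4 * A ^ 3) = -δ₀ / (η ^ 3 * A ^ 3) := by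
      field_simp
    have step3 : -δ₀ / (η ^ 3 * A ^ 3) ≤ -δ₀ / (L ^ 3 * ηbar ^ 3) := by
      rw [div_le_div_iff₀ (by positivity) (by positivity)]
      have h1 : η ^ 3 ≤ ηbar ^ 3 := pow_le_pow_left₀ (le_of_lt hη0) hηle 3
      have h2 : A ^ 3 ≤ L ^ 3 := pow_le_pow_left₀ (le_of_lt hApos) hAle 3
      have h3 : η ^ 3 * A ^ 3 ≤ ηbar ^ 3 * L ^ 3 :=
        mul_le_mul h1 h2 (by positivity) (by positivity)
      nlinarith [h3]
    calc Λ'' η + Λ' η / η ≤ -(η * δ₀) / (η ^ 4 * A ^ 3) := step1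
      _ = -δ₀ / (η ^ 3 * A ^ 3) := step2
      _ ≤ -δ₀ / (L ^ 3 * ηbar ^ 3) := step3
  refine ⟨main, δ₀ / (L ^ 3 * ηbar ^ 3), by positivity, fun η hη => ?_⟩
  have := main η hη
  rw [neg_div] at this
  linarith
end

section
/- Let n ≥ 1, T > 0, C ≥ 0. Let W : [0,T] × ℝⁿ → ℝ be continuous and bounded, and assume that for every y ∈ ℝⁿ the map t ↦ W(t,y) is differentiable on (0,T] (with the one-sided derivative at t = T). Let K : [0,T] × ℝⁿ × ℝⁿ → [0,∞) be measurable with sup over (t,y) of ∫_{ℝⁿ} K(t,y,z)·(1 + |z|) dz finite. Assume ∂_tW(t,y) ≤ C + ∫_{ℝⁿ} K(t,y,z)·(W(t,y+z) − W(t,y)) dz for all t ∈ (0,T] and y ∈ ℝⁿ. Then W(t,y) ≤ sup_{y'∈ℝⁿ} W(0,y') + C·t for all (t,y) ∈ [0,T] × ℝⁿ. -/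
open MeasureTheory Set

/-- nonlocal maximum-principle comparison: if
`∂_tW ≤ C + ∫K(t,y,z)(W(t,y+z)−W(t,y))dz` with a nonnegative kernel of
uniformly finite first moment, then `W(t,y) ≤ sup W(0,·) + C·t`. -/
theorem nonlocal_maximum_principle
    (n : ℕ) (hn : 1 ≤ n) (T C : ℝ) (hT : 0 < T) (hC : 0 ≤ C)
    (W W' : ℝ → EuclideanSpace ℝ (Fin n) → ℝ)
    (hWcont : ContinuousOn (fun p : ℝ × EuclideanSpace ℝ (Fin n) => W p.1 p.2)
      (Icc 0 T ×ˢ univ))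
    (hWbdd : ∃ B : ℝ, ∀ t ∈ Icc (0:ℝ) T, ∀ y, |W t y| ≤ B)
    (hW' : ∀ y, ∀ t ∈ Ioc (0:ℝ) T,
      HasDerivWithinAt (fun s => W s y) (W' t y) (Ioc 0 T) t)
    (K : ℝ → EuclideanSpace ℝ (Fin n) → EuclideanSpace ℝ (Fin n) → ℝ)
    (hKmeas : ∀ t y, Measurable (K t y))
    (hKnn : ∀ t y z, 0 ≤ K t y z)
    (hKint : ∀ t ∈ Icc (0:ℝ) T, ∀ y,
      Integrable (fun z => K t y z * (1 + ‖z‖)))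
    (hKbdd : ∃ C₁ : ℝ, ∀ t ∈ Icc (0:ℝ) T, ∀ y,
      (∫ z, K t y z * (1 + ‖z‖)) ≤ C₁)
    (hineq : ∀ t ∈ Ioc (0:ℝ) T, ∀ y,
      W' t y ≤ C + ∫ z, K t y z * (W t (y + z) - W t y)) :
    ∀ t ∈ Icc (0:ℝ) T, ∀ y, W t y ≤ (⨆ y', W 0 y') + C * t := by
  classical
  obtain ⟨B, hB⟩ := hWbdd
  obtain ⟨C₁, hC₁⟩ := hKbdd
  have h0T : (0:ℝ) ∈ Icc (0:ℝ) T := ⟨le_refl 0, hT.le⟩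
  set S0 := ⨆ y', W 0 y' with hS0def
  have hbdd0 : BddAbove (range (W 0)) := by
    refine ⟨B, ?_⟩
    rintro x ⟨y', rfl⟩
    exact (abs_le.1 (hB 0 h0T y')).2
  have hS0le : ∀ y, W 0 y ≤ S0 := fun y => le_ciSup hbdd0 y
  -- continuity in time for fixed y
  have hWt : ∀ y, ContinuousOn (fun t => W t y) (Icc 0 T) := by
    intro y
    have hmap : MapsTo (fun t : ℝ => ((t, y) : ℝ × EuclideanSpace ℝ (Fin n)))
        (Icc 0 T) (Icc 0 T ×ˢ univ) := fun t ht => ⟨ht, mem_univ y⟩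
    exact hWcont.comp ((Continuous.prodMk_left y).comp continuous_id).continuousOn hmap
  -- continuity in space for fixed t
  have hWy : ∀ t ∈ Icc (0:ℝ) T, Continuous (fun y => W t y) := by
    intro t ht
    rw [← continuousOn_univ]
    have hmap : MapsTo (fun y : EuclideanSpace ℝ (Fin n) => ((t, y) : ℝ × _))
        univ (Icc 0 T ×ˢ univ) := fun y _ => ⟨ht, mem_univ y⟩
    exact hWcont.comp (Continuous.prodMk_right t).continuousOn hmap
  -- K is integrable
  have hKI : ∀ t ∈ Icc (0:ℝ) T, ∀ y, Integrable (K t y) := by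
    intro t ht y
    refine (hKint t ht y).mono' (hKmeas t y).aestronglyMeasurable ?_
    filter_upwards with z
    rw [Real.norm_eq_abs, abs_of_nonneg (hKnn t y z)]
    nlinarith [hKnn t y z, norm_nonneg z]
  have hKle : ∀ t ∈ Icc (0:ℝ) T, ∀ y, (∫ z, K t y z) ≤ C₁ := by
    intro t ht y
    refine le_trans (integral_mono (hKI t ht y) (hKint t ht y) fun z => ?_) (hC₁ t ht y)
    have := hKnn t y z
    have := norm_nonneg z
    nlinarith
  have hC₁0 : 0 ≤ C₁ := le_trans (integral_nonneg fun z =>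
    mul_nonneg (hKnn 0 0 z) (by positivity)) (hC₁ 0 h0T 0)
  -- main claim with ε
  suffices h : ∀ ε > (0:ℝ), ∀ t ∈ Icc (0:ℝ) T, ∀ y, W t y ≤ S0 + (C + ε) * t by
    intro t ht y
    by_contra hcon
    push_neg at hcon
    set η := W t y - (S0 + C * t) with hη
    have hηpos : 0 < η := by simpa [hη] using sub_pos.2 hcon
    have := h (η / (2 * T)) (by positivity) t ht y
    have htT : t ≤ T := ht.2
    have ht0 : 0 ≤ t := ht.1
    have : (η / (2 * T)) * t ≤ η / 2 := by
      rw [div_mul_eq_mul_div, div_le_div_iff₀ (by positivity) (by norm_num)]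
      nlinarith
    nlinarith [h (η / (2 * T)) (by positivity) t ht y]
  intro ε hε
  by_contra hcon
  push_neg at hcon
  obtain ⟨t₁, ht₁, y₁, hval⟩ := hcon
  -- the global shifted supremum
  set A := (fun p : ℝ × EuclideanSpace ℝ (Fin n) => W p.1 p.2 - (C + ε) * p.1) ''
    (Icc 0 T ×ˢ univ) with hAdef
  have hAne : A.Nonempty := ⟨_, ⟨(t₁, y₁), ⟨ht₁, mem_univ y₁⟩, rfl⟩⟩
  have hAbdd : BddAbove A := by
    refine ⟨B, ?_⟩
    rintro x ⟨⟨t, y⟩, ⟨ht, -⟩, rfl⟩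
    have h1 := (abs_le.1 (hB t ht y)).2
    have h2 : 0 ≤ (C + ε) * t := mul_nonneg (by linarith) ht.1
    simp only
    linarith
  set Φ := sSup A with hΦdef
  have hfle : ∀ t ∈ Icc (0:ℝ) T, ∀ y, W t y - (C + ε) * t ≤ Φ := by
    intro t ht y
    exact le_csSup hAbdd ⟨(t, y), ⟨ht, mem_univ y⟩, rfl⟩
  have hΦgt : S0 < Φ := by
    have := hfle t₁ ht₁ y₁
    nlinarith
  -- choose δ
  set δ := min ((Φ - S0) / 2) (ε / (2 * (C₁ + 1))) with hδdef
  have hδpos : 0 < δ := lt_min (by linarith) (by positivity)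
  have hδ1 : S0 ≤ Φ - 2 * δ := by
    have := min_le_left ((Φ - S0) / 2) (ε / (2 * (C₁ + 1)))
    rw [← hδdef] at this
    linarith
  have hδ2 : δ * C₁ < ε := by
    have h := min_le_right ((Φ - S0) / 2) (ε / (2 * (C₁ + 1)))
    rw [← hδdef] at h
    have : δ * (2 * (C₁ + 1)) ≤ ε := by
      rw [← le_div_iff₀ (by positivity)]
      exact h
    nlinarith
  -- a near-maximizer
  obtain ⟨x, hxA, hx⟩ := exists_lt_of_lt_csSup hAne (by linarith : Φ - δ < Φ)
  obtain ⟨⟨t₀, y₀⟩, ⟨ht₀', -⟩, rfl⟩ := hxA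
  simp only at hx
  have ht₀ : t₀ ∈ Icc (0:ℝ) T := ht₀'
  set f : ℝ → ℝ := fun t => W t y₀ - (C + ε) * t with hfdef
  have hft₀ : Φ - δ < f t₀ := hx
  have hfcont : ContinuousOn f (Icc 0 T) :=
    (hWt y₀).sub (continuous_const.mul continuous_id).continuousOn
  have ht₀pos : 0 < t₀ := by
    rcases lt_or_eq_of_le ht₀.1 with h | h
    · exact h
    · exfalso
      have : f 0 = W 0 y₀ := by simp [hfdef]
      have h0 : f 0 ≤ S0 := by rw [this]; exact hS0le y₀
      rw [← h] at hft₀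
      linarith
  -- the last time the function is below Φ - δ
  set Sset := {s : ℝ | s ∈ Icc 0 t₀ ∧ f s ≤ Φ - δ} with hSsetdef
  have hS0mem : (0:ℝ) ∈ Sset := by
    constructor
    · exact ⟨le_refl 0, ht₀pos.le⟩
    · have : f 0 = W 0 y₀ := by simp [hfdef]
      rw [this]
      have := hS0le y₀
      linarith
  have hSne : Sset.Nonempty := ⟨0, hS0mem⟩
  have hSbdd : BddAbove Sset := ⟨t₀, fun s hs => hs.1.2⟩
  have hSclosed : IsClosed Sset := by
    have : Sset = Icc 0 t₀ ∩ f ⁻¹' Iic (Φ - δ) := rfl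
    rw [this]
    exact (hfcont.mono (Icc_subset_Icc_right ht₀.2)).preimage_isClosed_of_isClosed
      isClosed_Icc isClosed_Iic
  set s₀ := sSup Sset with hs₀def
  have hs₀mem : s₀ ∈ Sset := hSclosed.csSup_mem hSne hSbdd
  have hs₀lt : s₀ < t₀ := by
    rcases lt_or_eq_of_le hs₀mem.1.2 with h | h
    · exact h
    · exfalso; rw [h] at hs₀mem; linarith [hs₀mem.2]
  have hgtδ : ∀ s ∈ Ioc s₀ t₀, Φ - δ < f s := by
    intro s hs
    by_contra hle
    push_neg at hle
    have : s ∈ Sset := ⟨⟨le_trans hs₀mem.1.1 hs.1.le, hs.2⟩, hle⟩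
    exact absurd (le_csSup hSbdd this) (not_le.2 hs.1)
  -- derivative of f on the open interval
  have hderiv : ∀ s ∈ Ioo s₀ t₀, HasDerivAt f (W' s y₀ - (C + ε)) s := by
    intro s hs
    have hs0 : 0 < s := lt_of_le_of_lt hs₀mem.1.1 hs.1
    have hsT : s < T := lt_of_lt_of_le hs.2 ht₀.2
    have hnhds : Ioc (0:ℝ) T ∈ nhds s :=
      Filter.mem_of_superset (Ioo_mem_nhds hs0 hsT) Ioo_subset_Ioc_self
    have h1 : HasDerivAt (fun t => W t y₀) (W' s y₀) s :=
      (hW' y₀ s ⟨hs0, hsT.le⟩).hasDerivAt hnhds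
    have h2 : HasDerivAt (fun t : ℝ => (C + ε) * t) (C + ε) s := by
      simpa using (hasDerivAt_id s).const_mul (C + ε)
    exact h1.sub h2
  -- there is a point with positive derivative
  have hex : ∃ s ∈ Ioo s₀ t₀, C + ε < W' s y₀ := by
    by_contra hno
    push_neg at hno
    have hanti : AntitoneOn f (Icc s₀ t₀) := by
      refine antitoneOn_of_deriv_nonpos (convex_Icc s₀ t₀)
        (hfcont.mono (Icc_subset_Icc hs₀mem.1.1 ht₀.2)) ?_ ?_
      · rw [interior_Icc]
        exact fun s hs => (hderiv s hs).differentiableAt.differentiableWithinAt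
      · rw [interior_Icc]
        intro s hs
        rw [(hderiv s hs).deriv]
        linarith [hno s hs]
    have := hanti (left_mem_Icc.2 hs₀lt.le) (right_mem_Icc.2 hs₀lt.le) hs₀lt.le
    have hle := hs₀mem.2
    linarith
  obtain ⟨s, hs, hds⟩ := hex
  have hs0 : 0 < s := lt_of_le_of_lt hs₀mem.1.1 hs.1
  have hsT : s ≤ T := le_trans hs.2.le ht₀.2
  have hsIcc : s ∈ Icc (0:ℝ) T := ⟨hs0.le, hsT⟩
  have hfs : Φ - δ < f s := hgtδ s ⟨hs.1, hs.2.le⟩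
  -- pointwise bound on the integrand
  have hptw : ∀ z, K s y₀ z * (W s (y₀ + z) - W s y₀) ≤ K s y₀ z * δ := by
    intro z
    have h1 : W s (y₀ + z) - (C + ε) * s ≤ Φ := hfle s hsIcc (y₀ + z)
    have h2 : Φ - δ < W s y₀ - (C + ε) * s := hfs
    have : W s (y₀ + z) - W s y₀ ≤ δ := by linarith
    exact mul_le_mul_of_nonneg_left this (hKnn s y₀ z)
  -- integrability of the integrand
  have hint : Integrable (fun z => K s y₀ z * (W s (y₀ + z) - W s y₀)) := by
    have hWc : Continuous (fun z => W s (y₀ + z) - W s y₀) :=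
      ((hWy s hsIcc).comp (continuous_const.add continuous_id)).sub continuous_const
    refine ((hKI s hsIcc y₀).const_mul (2 * B)).mono'
      ((hKmeas s y₀).aestronglyMeasurable.mul hWc.aestronglyMeasurable) ?_
    filter_upwards with z
    rw [Real.norm_eq_abs, abs_mul, abs_of_nonneg (hKnn s y₀ z)]
    have h1 : |W s (y₀ + z) - W s y₀| ≤ 2 * B := by
      have := hB s hsIcc (y₀ + z)
      have := hB s hsIcc y₀
      rw [abs_le] at *
      constructor <;> [linarith [this.1]; linarith [this.2]]
    calc K s y₀ z * |W s (y₀ + z) - W s y₀| ≤ K s y₀ z * (2 * B) :=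
          mul_le_mul_of_nonneg_left h1 (hKnn s y₀ z)
      _ = 2 * B * K s y₀ z := by ring
  -- final contradiction
  have hIbound : (∫ z, K s y₀ z * (W s (y₀ + z) - W s y₀)) ≤ δ * C₁ := by
    have h1 : (∫ z, K s y₀ z * (W s (y₀ + z) - W s y₀)) ≤ ∫ z, K s y₀ z * δ :=
      integral_mono hint ((hKI s hsIcc y₀).mul_const δ) hptw
    have h2 : (∫ z, K s y₀ z * δ) = (∫ z, K s y₀ z) * δ := integral_mul_const δ _
    have h3 : (∫ z, K s y₀ z) * δ ≤ C₁ * δ :=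
      mul_le_mul_of_nonneg_right (hKle s hsIcc y₀) hδpos.le
    calc (∫ z, K s y₀ z * (W s (y₀ + z) - W s y₀)) ≤ (∫ z, K s y₀ z) * δ := h2 ▸ h1
      _ ≤ C₁ * δ := h3
      _ = δ * C₁ := mul_comm _ _
  have := hineq s ⟨hs0, hsT⟩ y₀
  linarith
end

section
/- Let n ≥ 1, T > 0, C ≥ 0. Let V : [0,T] × ℝⁿ → ℝ be continuous and bounded, and assume that for every y ∈ ℝⁿ the map t ↦ V(t,y) is differentiable on (0,T] (with the one-sided derivative at t = T). Let K : [0,T] × ℝⁿ × ℝⁿ → [0,∞) be measurable with sup over (t,y) of ∫_{ℝⁿ} K(t,y,z)·(1 + |z|) dz finite. Assume ∂_tV(t,y) ≥ −C + ∫_{ℝⁿ} K(t,y,z)·(V(t,y+z) − V(t,y)) dz for all t ∈ (0,T] and y ∈ ℝⁿ. Then V(t,y) ≥ inf_{y'∈ℝⁿ} V(0,y') − C·t for all (t,y) ∈ [0,T] × ℝⁿ. -/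
open MeasureTheory Set

private lemma mono_aux' {f f' : ℝ → ℝ} {a b : ℝ}
    (hc : ContinuousOn f (Icc a b))
    (hd : ∀ x ∈ Ioo a b, HasDerivAt f (f' x) x)
    (h0 : ∀ x ∈ Ioo a b, 0 ≤ f' x) :
    MonotoneOn f (Icc a b) := by
  apply monotoneOn_of_deriv_nonneg (convex_Icc a b) hc
  · intro x hx
    rw [interior_Icc] at hx
    exact (hd x hx).differentiableAt.differentiableWithinAt
  · intro x hx
    rw [interior_Icc] at hx
    rw [(hd x hx).deriv]
    exact h0 x hx

set_option maxHeartbeats 1000000 in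
/-- nonlocal minimum-principle comparison: if
`∂_tV ≥ −C + ∫K(t,y,z)(V(t,y+z)−V(t,y))dz` with a nonnegative kernel of
uniformly finite first moment, then `V(t,y) ≥ inf V(0,·) − C·t`. -/
theorem nonlocal_minimum_principle
    (n : ℕ) (hn : 1 ≤ n) (T C : ℝ) (hT : 0 < T) (hC : 0 ≤ C)
    (V V' : ℝ → EuclideanSpace ℝ (Fin n) → ℝ)
    (hVcont : ContinuousOn (fun p : ℝ × EuclideanSpace ℝ (Fin n) => V p.1 p.2)
      (Icc 0 T ×ˢ univ))
    (hVbdd : ∃ B : ℝ, ∀ t ∈ Icc (0:ℝ) T, ∀ y, |V t y| ≤ B)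
    (hV' : ∀ y, ∀ t ∈ Ioc (0:ℝ) T,
      HasDerivWithinAt (fun s => V s y) (V' t y) (Ioc 0 T) t)
    (K : ℝ → EuclideanSpace ℝ (Fin n) → EuclideanSpace ℝ (Fin n) → ℝ)
    (hKmeas : ∀ t y, Measurable (K t y))
    (hKnn : ∀ t y z, 0 ≤ K t y z)
    (hKint : ∀ t ∈ Icc (0:ℝ) T, ∀ y,
      Integrable (fun z => K t y z * (1 + ‖z‖)))
    (hKbdd : ∃ C₁ : ℝ, ∀ t ∈ Icc (0:ℝ) T, ∀ y,
      (∫ z, K t y z * (1 + ‖z‖)) ≤ C₁)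
    (hineq : ∀ t ∈ Ioc (0:ℝ) T, ∀ y,
      -C + (∫ z, K t y z * (V t (y + z) - V t y)) ≤ V' t y) :
    ∀ t ∈ Icc (0:ℝ) T, ∀ y, (⨅ y', V 0 y') - C * t ≤ V t y := by
  classical
  obtain ⟨B, hB⟩ := hVbdd
  obtain ⟨C₁, hC₁⟩ := hKbdd
  have h0T : (0:ℝ) ∈ Icc (0:ℝ) T := ⟨le_rfl, hT.le⟩
  have hB0 : 0 ≤ B := (abs_nonneg _).trans (hB 0 h0T 0)
  set C₂ : ℝ := max C₁ 0 with hC₂def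
  have hC₂0 : 0 ≤ C₂ := le_max_right _ _
  set M : ℝ := C + 2 * B * C₂ + 1 with hMdef
  have hM1 : 1 ≤ M := by nlinarith
  have hM0 : 0 < M := by linarith
  -- continuity in y and t
  have hVy : ∀ t ∈ Icc (0:ℝ) T, Continuous fun y => V t y := by
    intro t ht
    rw [← continuousOn_univ]
    have h1 : Continuous fun y : EuclideanSpace ℝ (Fin n) => ((t, y) : ℝ × EuclideanSpace ℝ (Fin n)) :=
      continuous_const.prodMk continuous_id
    exact hVcont.comp h1.continuousOn (fun y _ => ⟨ht, mem_univ y⟩)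
  have hVt : ∀ y, ContinuousOn (fun t => V t y) (Icc 0 T) := by
    intro y
    have h1 : Continuous fun t : ℝ => ((t, y) : ℝ × EuclideanSpace ℝ (Fin n)) :=
      continuous_id.prodMk continuous_const
    exact hVcont.comp h1.continuousOn (fun t ht => ⟨ht, mem_univ y⟩)
  -- integrability facts
  have hKi : ∀ t ∈ Icc (0:ℝ) T, ∀ y, Integrable (K t y) := by
    intro t ht y
    refine (hKint t ht y).mono' (hKmeas t y).aestronglyMeasurable ?_
    filter_upwards with z
    rw [Real.norm_eq_abs, abs_of_nonneg (hKnn t y z)]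
    nlinarith [hKnn t y z, norm_nonneg z]
  have hKle : ∀ t ∈ Icc (0:ℝ) T, ∀ y, (∫ z, K t y z) ≤ C₂ := by
    intro t ht y
    have h1 : (∫ z, K t y z) ≤ ∫ z, K t y z * (1 + ‖z‖) := by
      refine integral_mono (hKi t ht y) (hKint t ht y) (fun z => ?_)
      nlinarith [hKnn t y z, norm_nonneg z]
    exact h1.trans ((hC₁ t ht y).trans (le_max_left _ _))
  have hKI0 : ∀ t ∈ Icc (0:ℝ) T, ∀ y, 0 ≤ ∫ z, K t y z := by
    intro t ht y
    exact integral_nonneg (hKnn t y)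
  have hDi : ∀ t ∈ Icc (0:ℝ) T, ∀ y,
      Integrable (fun z => K t y z * (V t (y + z) - V t y)) := by
    intro t ht y
    refine ((hKint t ht y).const_mul (2 * B)).mono' ?_ ?_
    · exact (hKmeas t y).aestronglyMeasurable.mul
        (((hVy t ht).comp (continuous_const.add continuous_id)).sub
          continuous_const).aestronglyMeasurable
    · filter_upwards with z
      obtain ⟨ha1, ha2⟩ := abs_le.mp (hB t ht (y + z))
      obtain ⟨hb1, hb2⟩ := abs_le.mp (hB t ht y)
      rw [Real.norm_eq_abs, abs_mul, abs_of_nonneg (hKnn t y z)]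
      have habs : |V t (y + z) - V t y| ≤ 2 * B := abs_le.mpr ⟨by linarith, by linarith⟩
      have hK := hKnn t y z
      have hz := norm_nonneg z
      nlinarith [mul_le_mul_of_nonneg_left habs hK, mul_nonneg (mul_nonneg hB0 hK) hz]
  -- lower bound for the nonlocal term
  have hIlb : ∀ t ∈ Icc (0:ℝ) T, ∀ y, ∀ c : ℝ, c ≤ 0 →
      (∀ z, c ≤ V t (y + z) - V t y) →
      C₂ * c ≤ ∫ z, K t y z * (V t (y + z) - V t y) := by
    intro t ht y c hc hcz
    have h1 : (∫ z, K t y z * c) ≤ ∫ z, K t y z * (V t (y + z) - V t y) :=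
      integral_mono ((hKi t ht y).mul_const c) (hDi t ht y)
        (fun z => mul_le_mul_of_nonneg_left (hcz z) (hKnn t y z))
    rw [integral_mul_const] at h1
    have h2 : C₂ * c ≤ (∫ z, K t y z) * c := by
      nlinarith [hKle t ht y, hKI0 t ht y]
    linarith
  -- BddBelow
  have hbdd : ∀ t ∈ Icc (0:ℝ) T, BddBelow (range fun y => V t y) := by
    intro t ht
    refine ⟨-B, ?_⟩
    rintro x ⟨y, rfl⟩
    have := abs_le.mp (hB t ht y)
    linarith [this.1]
  -- uniform lower bound on V'
  have hV'lb : ∀ t ∈ Ioc (0:ℝ) T, ∀ y, -M ≤ V' t y := by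
    intro t ht y
    have htIcc : t ∈ Icc (0:ℝ) T := ⟨ht.1.le, ht.2⟩
    have h1 := hineq t ht y
    have h2 : C₂ * (-(2 * B)) ≤ ∫ z, K t y z * (V t (y + z) - V t y) := by
      refine hIlb t htIcc y (-(2 * B)) (by linarith) (fun z => ?_)
      obtain ⟨ha1, ha2⟩ := abs_le.mp (hB t htIcc (y + z))
      obtain ⟨hb1, hb2⟩ := abs_le.mp (hB t htIcc y)
      linarith
    have h3 : C₂ * (-(2 * B)) = -(2 * B * C₂) := by ring
    rw [h3] at h2
    linarith
  -- one-sided Lipschitz bound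
  have hLip : ∀ y, ∀ s ∈ Icc (0:ℝ) T, ∀ t ∈ Icc (0:ℝ) T, s ≤ t →
      V s y - M * (t - s) ≤ V t y := by
    intro y s hs t ht hst
    have hmono : MonotoneOn (fun τ => V τ y + M * τ) (Icc 0 T) := by
      refine mono_aux' ((hVt y).add (continuous_const.mul continuous_id).continuousOn)
        (f' := fun τ => V' τ y + M) ?_ ?_
      · intro x hx
        have hd1 : HasDerivAt (fun τ => V τ y) (V' x y) x :=
          (hV' y x ⟨hx.1, hx.2.le⟩).hasDerivAt (Ioc_mem_nhds hx.1 hx.2)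
        have hd2 : HasDerivAt (fun τ : ℝ => M * τ) M x := by
          simpa using (hasDerivAt_id x).const_mul M
        exact hd1.add hd2
      · intro x hx
        have := hV'lb x ⟨hx.1, hx.2.le⟩ y
        show (0:ℝ) ≤ V' x y + M
        linarith
    have := hmono hs ht hst
    simp only at this
    linarith
  have hLipInf : ∀ s ∈ Icc (0:ℝ) T, ∀ t ∈ Icc (0:ℝ) T, s ≤ t →
      (⨅ y, V s y) - M * (t - s) ≤ ⨅ y, V t y := by
    intro s hs t ht hst
    refine le_ciInf (fun y => ?_)
    have h1 : (⨅ y', V s y') ≤ V s y := ciInf_le (hbdd s hs) y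
    have h2 := hLip y s hs t ht hst
    linarith
  -- main ε-claim
  have key : ∀ ε : ℝ, 0 < ε → ∀ t ∈ Icc (0:ℝ) T, ∀ y,
      (⨅ y', V 0 y') - ε - (C + ε) * t ≤ V t y := by
    intro ε hε
    by_contra hcon
    push_neg at hcon
    obtain ⟨t₀, ht₀, y₀, hy₀⟩ := hcon
    set S : Set ℝ := {t | t ∈ Icc (0:ℝ) T ∧
      (⨅ y', V t y') < (⨅ y', V 0 y') - ε - (C + ε) * t} with hSdef
    have hS0 : t₀ ∈ S := ⟨ht₀, lt_of_le_of_lt (ciInf_le (hbdd t₀ ht₀) y₀) hy₀⟩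
    have hSne : S.Nonempty := ⟨t₀, hS0⟩
    have hSbdd : BddBelow S := ⟨0, fun x hx => hx.1.1⟩
    set t₁ := sInf S with ht₁def
    have ht₁0 : 0 ≤ t₁ := le_csInf hSne (fun x hx => hx.1.1)
    have ht₁T : t₁ ≤ T := le_trans (csInf_le hSbdd hS0) ht₀.2
    have ht₁Icc : t₁ ∈ Icc (0:ℝ) T := ⟨ht₁0, ht₁T⟩
    have hpre : ∀ s, 0 ≤ s → s < t₁ →
        (⨅ y', V 0 y') - ε - (C + ε) * s ≤ ⨅ y', V s y' := by
      intro s hs0 hst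
      by_contra hns
      push_neg at hns
      have hsS : s ∈ S := ⟨⟨hs0, hst.le.trans ht₁T⟩, hns⟩
      exact absurd (csInf_le hSbdd hsS) (not_le.mpr hst)
    have hup : (⨅ y', V t₁ y') ≤ (⨅ y', V 0 y') - ε - (C + ε) * t₁ := by
      have hall : ∀ η : ℝ, 0 < η →
          (⨅ y', V t₁ y') - η ≤ (⨅ y', V 0 y') - ε - (C + ε) * t₁ := by
        intro η hη
        obtain ⟨u, huS, hu⟩ := (csInf_lt_iff hSbdd hSne).mp
          (lt_add_of_pos_right t₁ (show (0:ℝ) < η / M by positivity))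
        have ht₁u : t₁ ≤ u := csInf_le hSbdd huS
        have h1 := hLipInf t₁ ht₁Icc u huS.1 ht₁u
        have h2 := huS.2
        have h3 : M * (u - t₁) ≤ η := by
          have h4 : u - t₁ < η / M := by linarith
          have h5 := (lt_div_iff₀' hM0).mp h4
          linarith
        have h4 : (C + ε) * t₁ ≤ (C + ε) * u := by nlinarith
        linarith
      linarith [le_of_forall_sub_le hall]
    have ht₁pos : 0 < t₁ := by
      rcases lt_or_eq_of_le ht₁0 with h | h
      · exact h
      · exfalso
        rw [← h] at hup
        simp only [mul_zero] at hup
        linarith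
    -- Grönwall on [t₁/2, t₁]
    set s₁ := t₁ / 2 with hs₁def
    have hs₁pos : 0 < s₁ := by positivity
    have hs₁lt : s₁ < t₁ := by linarith
    have hts : 0 < t₁ - s₁ := by linarith
    have hEpos : 0 < Real.exp (C₂ * t₁) := Real.exp_pos _
    set δ := ε * (t₁ - s₁) / (2 * Real.exp (C₂ * t₁)) with hδdef
    have hδpos : 0 < δ := by positivity
    obtain ⟨y, hy⟩ := exists_lt_of_ciInf_lt
      (show (⨅ y', V t₁ y') < (⨅ y', V t₁ y') + δ from lt_add_of_pos_right _ hδpos)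
    set g : ℝ → ℝ := fun τ =>
      (V τ y - ((⨅ y', V 0 y') - ε - (C + ε) * τ)) * Real.exp (C₂ * τ) - ε * τ with hgdef
    have hIccsub : Icc s₁ t₁ ⊆ Icc (0:ℝ) T := Icc_subset_Icc hs₁pos.le ht₁T
    have hgc : ContinuousOn g (Icc s₁ t₁) := by
      refine ContinuousOn.sub (ContinuousOn.mul ?_ ?_) ?_
      · exact ((hVt y).mono hIccsub).sub (by fun_prop)
      · exact (Real.continuous_exp.comp (continuous_const.mul continuous_id)).continuousOn
      · exact (continuous_const.mul continuous_id).continuousOn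
    have hgmono : MonotoneOn g (Icc s₁ t₁) := by
      refine mono_aux' hgc (f' := fun τ =>
        (V' τ y + (C + ε)) * Real.exp (C₂ * τ) +
        (V τ y - ((⨅ y', V 0 y') - ε - (C + ε) * τ)) * (C₂ * Real.exp (C₂ * τ)) - ε) ?_ ?_
      · intro τ hτ
        have hτpos : 0 < τ := lt_trans hs₁pos hτ.1
        have hτT : τ < T := lt_of_lt_of_le hτ.2 ht₁T
        have hVd : HasDerivAt (fun τ => V τ y) (V' τ y) τ :=
          (hV' y τ ⟨hτpos, hτT.le⟩).hasDerivAt (Ioc_mem_nhds hτpos hτT)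
        have h2 : HasDerivAt (fun τ : ℝ => V τ y - ((⨅ y', V 0 y') - ε - (C + ε) * τ))
            (V' τ y + (C + ε)) τ := by
          have hlin : HasDerivAt (fun τ : ℝ => (⨅ y', V 0 y') - ε - (C + ε) * τ)
              (-(C + ε)) τ := by
            have := ((hasDerivAt_id τ).const_mul (C + ε)).const_sub ((⨅ y', V 0 y') - ε)
            simpa [sub_sub] using this
          have := hVd.sub hlin
          rw [sub_neg_eq_add] at this
          exact this
        have h3 : HasDerivAt (fun τ : ℝ => Real.exp (C₂ * τ)) (C₂ * Real.exp (C₂ * τ)) τ := by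
          have := ((hasDerivAt_id τ).const_mul C₂).exp
          simpa [id_eq, mul_comm] using this
        have h5 : HasDerivAt (fun τ : ℝ => ε * τ) ε τ := by
          simpa using (hasDerivAt_id τ).const_mul ε
        exact (h2.mul h3).sub h5
      · intro τ hτ
        have hτpos : 0 < τ := lt_trans hs₁pos hτ.1
        have hτT : τ ≤ T := (lt_of_lt_of_le hτ.2 ht₁T).le
        have hτIcc : τ ∈ Icc (0:ℝ) T := ⟨hτpos.le, hτT⟩
        have hpreτ := hpre τ hτpos.le hτ.2
        have hinf_le : (⨅ y', V τ y') ≤ V τ y := ciInf_le (hbdd τ hτIcc) y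
        have hiI : C₂ * ((⨅ y', V τ y') - V τ y) ≤
            ∫ z, K τ y z * (V τ (y + z) - V τ y) := by
          refine hIlb τ hτIcc y _ (by linarith) (fun z => ?_)
          have := ciInf_le (hbdd τ hτIcc) (y + z)
          linarith
        have hiq := hineq τ ⟨hτpos, hτT⟩ y
        have hexp1 : 1 ≤ Real.exp (C₂ * τ) := Real.one_le_exp (by positivity)
        have hexppos : 0 < Real.exp (C₂ * τ) := Real.exp_pos _
        have e0 : 0 ≤ C₂ * ((⨅ y', V τ y') - ((⨅ y', V 0 y') - ε - (C + ε) * τ)) :=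
          mul_nonneg hC₂0 (by linarith)
        have hA : ε ≤ V' τ y + (C + ε) +
            C₂ * (V τ y - ((⨅ y', V 0 y') - ε - (C + ε) * τ)) := by
          nlinarith [hiq, hiI, e0]
        have hmul := mul_le_mul_of_nonneg_right hA hexppos.le
        have hmul2 : ε * 1 ≤ ε * Real.exp (C₂ * τ) := mul_le_mul_of_nonneg_left hexp1 hε.le
        show (0:ℝ) ≤ (V' τ y + (C + ε)) * Real.exp (C₂ * τ) +
          (V τ y - ((⨅ y', V 0 y') - ε - (C + ε) * τ)) * (C₂ * Real.exp (C₂ * τ)) - ε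
        nlinarith [hmul, hmul2]
    have hle := hgmono ⟨le_rfl, hs₁lt.le⟩ ⟨hs₁lt.le, le_rfl⟩ hs₁lt.le
    have hs₁Icc : s₁ ∈ Icc (0:ℝ) T := hIccsub ⟨le_rfl, hs₁lt.le⟩
    have hVs₁ : (⨅ y', V 0 y') - ε - (C + ε) * s₁ ≤ V s₁ y :=
      le_trans (hpre s₁ hs₁pos.le hs₁lt) (ciInf_le (hbdd s₁ hs₁Icc) y)
    have hVt₁ : V t₁ y - ((⨅ y', V 0 y') - ε - (C + ε) * t₁) < δ := by linarith
    have hgs : -(ε * s₁) ≤ g s₁ := by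
      have hexp : 0 < Real.exp (C₂ * s₁) := Real.exp_pos _
      have h1 : 0 ≤ (V s₁ y - ((⨅ y', V 0 y') - ε - (C + ε) * s₁)) * Real.exp (C₂ * s₁) :=
        mul_nonneg (by linarith) hexp.le
      simp only [hgdef]
      linarith
    have hgt : g t₁ ≤ δ * Real.exp (C₂ * t₁) - ε * t₁ := by
      have h1 : (V t₁ y - ((⨅ y', V 0 y') - ε - (C + ε) * t₁)) * Real.exp (C₂ * t₁) ≤
          δ * Real.exp (C₂ * t₁) := mul_le_mul_of_nonneg_right hVt₁.le hEpos.le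
      simp only [hgdef]
      linarith
    have hδE : δ * Real.exp (C₂ * t₁) = ε * (t₁ - s₁) / 2 := by
      rw [hδdef]
      field_simp
    nlinarith [mul_pos hε hts]
  -- conclusion
  intro t ht y
  have hall : ∀ η : ℝ, 0 < η → (⨅ y', V 0 y') - C * t - η ≤ V t y := by
    intro η hη
    have h1T : (0:ℝ) < 1 + T := by linarith
    have hε : 0 < η / (1 + T) := by positivity
    have hk := key (η / (1 + T)) hε t ht y
    have h1 : (η / (1 + T)) * (1 + t) ≤ η := by
      have h2 : (η / (1 + T)) * (1 + t) ≤ (η / (1 + T)) * (1 + T) := by nlinarith [ht.2]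
      have h3 : (η / (1 + T)) * (1 + T) = η := by field_simp
      linarith
    nlinarith [hk, h1]
  linarith [le_of_forall_sub_le hall]
end

section
/- Let n ≥ 1, T > 0. Let Λ : ℝⁿ × (0,∞) → ℝ be continuously differentiable. Let M : ℝⁿ → [0,∞) be measurable with ∫_{ℝⁿ} M(z) dz = 1 and ∫_{ℝⁿ} M(z)·(1+|z|)·e^{p·z} dz < ∞ for every p ∈ ℝⁿ. Let U : [0,T] × ℝⁿ → ℝ be twice continuously differentiable and satisfy ∂_tU(t,y) = −Λ(y, η(t,y)) for all (t,y), where η(t,y) := ∫_{ℝⁿ} M(z)·e^{∇_yU(t,y)·z} dz. Let ȳ : [0,T] → ℝⁿ be continuously differentiable with ∇_yU(t, ȳ(t)) = 0 for all t ∈ [0,T], and assume the Hessian D²_yU(t, ȳ(t)) is invertible for all t. Then ȳ satisfies the Canonical Equation: ȳ'(t) = (D²_yU(t, ȳ(t)))⁻¹ · ∇_yΛ(ȳ(t), 1) + ∂_ηΛ(ȳ(t), 1) · ∫_{ℝⁿ} M(z)·z dz for all t ∈ [0,T]. -/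
open MeasureTheory Set
open scoped RealInnerProductSpace


set_option maxHeartbeats 2000000
set_option synthInstance.maxHeartbeats 1000000


private noncomputable def sgnVec (n : ℕ) (S : Finset (Fin n)) : EuclideanSpace ℝ (Fin n) :=
  (WithLp.equiv 2 (Fin n → ℝ)).symm (fun i => if i ∈ S then (1:ℝ) else -1)

private lemma exp_norm_le_sum (n : ℕ) (z : EuclideanSpace ℝ (Fin n)) :
    Real.exp ‖z‖ ≤ ∑ S ∈ Finset.univ.powerset, Real.exp ⟪sgnVec n S, z⟫ := by
  have h1 : ‖z‖ ≤ ∑ i, |z i| := by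
    rw [EuclideanSpace.norm_eq]
    have h2 : ∑ i, ‖z i‖ ^ 2 ≤ (∑ i, |z i|) ^ 2 := by
      simpa [Real.norm_eq_abs] using
        Finset.sum_sq_le_sq_sum_of_nonneg (f := fun i => |z i|) (s := Finset.univ)
          (fun i _ => abs_nonneg _)
    calc Real.sqrt (∑ i, ‖z i‖ ^ 2) ≤ Real.sqrt ((∑ i, |z i|) ^ 2) := Real.sqrt_le_sqrt h2
    _ = ∑ i, |z i| := Real.sqrt_sq (Finset.sum_nonneg fun i _ => abs_nonneg _)
  calc Real.exp ‖z‖ ≤ Real.exp (∑ i, |z i|) := Real.exp_le_exp.2 h1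
  _ = ∏ i, Real.exp |z i| := Real.exp_sum _ _
  _ ≤ ∏ i, (Real.exp (z i) + Real.exp (-z i)) := by
      refine Finset.prod_le_prod (fun i _ => (Real.exp_pos _).le) (fun i _ => ?_)
      rcases abs_choice (z i) with h | h <;> rw [h]
      · exact le_add_of_nonneg_right (Real.exp_pos _).le
      · exact le_add_of_nonneg_left (Real.exp_pos _).le
  _ = ∑ S ∈ Finset.univ.powerset, (∏ i ∈ S, Real.exp (z i)) *
        ∏ i ∈ Finset.univ \ S, Real.exp (-z i) :=
      Finset.prod_add _ _ _
  _ ≤ _ := by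
      refine le_of_eq (Finset.sum_congr rfl fun S _ => ?_)
      rw [← Real.exp_sum, ← Real.exp_sum, ← Real.exp_add]
      congr 1
      rw [PiLp.inner_apply]
      simp only [RCLike.inner_apply, conj_trivial, sgnVec, WithLp.equiv_symm_apply, WithLp.ofLp_toLp]
      simp only [ite_mul, one_mul, neg_one_mul, mul_ite, mul_one, mul_neg_one, Finset.sum_ite,
        Finset.filter_mem_eq_inter, Finset.univ_inter, Finset.sdiff_eq_filter]


lemma integrable_weight (n : ℕ) (M : EuclideanSpace ℝ (Fin n) → ℝ)
    (hMmeas : Measurable M) (hMnn : ∀ z, 0 ≤ M z)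
    (hMexp : ∀ p : EuclideanSpace ℝ (Fin n),
      Integrable (fun z => M z * (1 + ‖z‖) * Real.exp ⟪p, z⟫)) :
    Integrable (fun z : EuclideanSpace ℝ (Fin n) => M z * (1 + ‖z‖)) := by
  have := hMexp 0
  simpa using this

lemma integrable_M (n : ℕ) (M : EuclideanSpace ℝ (Fin n) → ℝ)
    (hMmeas : Measurable M) (hMnn : ∀ z, 0 ≤ M z)
    (hMexp : ∀ p : EuclideanSpace ℝ (Fin n),
      Integrable (fun z => M z * (1 + ‖z‖) * Real.exp ⟪p, z⟫)) :
    Integrable M := by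
  refine (integrable_weight n M hMmeas hMnn hMexp).mono
    hMmeas.aestronglyMeasurable (Filter.Eventually.of_forall fun z => ?_)
  have h1 : (0:ℝ) ≤ 1 + ‖z‖ := by positivity
  rw [Real.norm_eq_abs, Real.norm_eq_abs, abs_of_nonneg (hMnn z),
    abs_of_nonneg (mul_nonneg (hMnn z) h1)]
  nlinarith [hMnn z, norm_nonneg z]

lemma integrable_Mz (n : ℕ) (M : EuclideanSpace ℝ (Fin n) → ℝ)
    (hMmeas : Measurable M) (hMnn : ∀ z, 0 ≤ M z)
    (hMexp : ∀ p : EuclideanSpace ℝ (Fin n),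
      Integrable (fun z => M z * (1 + ‖z‖) * Real.exp ⟪p, z⟫)) :
    Integrable (fun z : EuclideanSpace ℝ (Fin n) => M z • z) := by
  refine (integrable_weight n M hMmeas hMnn hMexp).mono
    (hMmeas.aestronglyMeasurable.smul aestronglyMeasurable_id)
    (Filter.Eventually.of_forall fun z => ?_)
  rw [norm_smul, Real.norm_eq_abs, Real.norm_eq_abs, abs_of_nonneg (hMnn z),
    abs_of_nonneg (mul_nonneg (hMnn z) (by positivity))]
  nlinarith [hMnn z, norm_nonneg z]

lemma integrable_MinnerSL (n : ℕ) (M : EuclideanSpace ℝ (Fin n) → ℝ)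
    (hMmeas : Measurable M) (hMnn : ∀ z, 0 ≤ M z)
    (hMexp : ∀ p : EuclideanSpace ℝ (Fin n),
      Integrable (fun z => M z * (1 + ‖z‖) * Real.exp ⟪p, z⟫)) :
    Integrable (fun z : EuclideanSpace ℝ (Fin n) => M z • (innerSL ℝ z)) := by
  refine (integrable_weight n M hMmeas hMnn hMexp).mono
    (hMmeas.aestronglyMeasurable.smul (innerSL ℝ).continuous.aestronglyMeasurable)
    (Filter.Eventually.of_forall fun z => ?_)
  have h1 : ‖M z • (innerSL ℝ z)‖ ≤ ‖M z‖ * ‖innerSL ℝ z‖ :=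
    ContinuousLinearMap.opNorm_smul_le _ _
  rw [innerSL_apply_norm, Real.norm_eq_abs, abs_of_nonneg (hMnn z)] at h1
  refine h1.trans ?_
  rw [Real.norm_eq_abs, abs_of_nonneg (mul_nonneg (hMnn z) (by positivity))]
  nlinarith [hMnn z, norm_nonneg z]

lemma key_hasFDerivAt (n : ℕ) (M : EuclideanSpace ℝ (Fin n) → ℝ)
    (hMmeas : Measurable M) (hMnn : ∀ z, 0 ≤ M z)
    (hMexp : ∀ p : EuclideanSpace ℝ (Fin n),
      Integrable (fun z => M z * (1 + ‖z‖) * Real.exp ⟪p, z⟫)) :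
    HasFDerivAt (fun p : EuclideanSpace ℝ (Fin n) => ∫ z, M z * Real.exp ⟪p, z⟫)
      (∫ z, M z • (innerSL ℝ z)) 0 := by
  have key := hasFDerivAt_integral_of_dominated_of_fderiv_le
    (𝕜 := ℝ) (μ := (volume : Measure (EuclideanSpace ℝ (Fin n))))
    (F := fun p z => M z * Real.exp ⟪p, z⟫)
    (F' := fun p z => (M z * Real.exp ⟪p, z⟫) • innerSL ℝ z)
    (x₀ := 0)
    (bound := fun z => ∑ S ∈ Finset.univ.powerset, M z * (1 + ‖z‖) * Real.exp ⟪sgnVec n S, z⟫)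
    (s := Metric.ball 0 1) (Metric.ball_mem_nhds 0 one_pos)
    ?_ ?_ ?_ ?_ ?_ ?_
  · simpa using key
  · -- hF_meas
    refine Filter.Eventually.of_forall fun x => ?_
    exact (hMmeas.mul (Real.continuous_exp.comp (innerSL ℝ x).continuous).measurable).aestronglyMeasurable
  · -- hF_int
    simpa using integrable_M n M hMmeas hMnn hMexp
  · -- hF'_meas
    exact ((hMmeas.mul
      (Real.continuous_exp.comp (innerSL ℝ (0:EuclideanSpace ℝ (Fin n))).continuous).measurable).aestronglyMeasurable.smul
      (innerSL ℝ).continuous.aestronglyMeasurable)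
  · -- h_bound
    refine Filter.Eventually.of_forall fun z => fun x hx => ?_
    have h0 : ‖(M z * Real.exp ⟪x, z⟫) • (innerSL ℝ z)‖
        ≤ (M z * Real.exp ⟪x, z⟫) * ‖z‖ := by
      have := ContinuousLinearMap.opNorm_smul_le (M z * Real.exp ⟪x, z⟫) (innerSL ℝ z)
      rwa [innerSL_apply_norm, Real.norm_eq_abs,
        abs_of_nonneg (mul_nonneg (hMnn z) (Real.exp_pos _).le)] at this
    refine le_trans h0 ?_
    show _ ≤ ∑ S ∈ Finset.univ.powerset, M z * (1 + ‖z‖) * Real.exp ⟪sgnVec n S, z⟫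
    rw [← Finset.mul_sum]
    have h1 : Real.exp ⟪x, z⟫ ≤ Real.exp ‖z‖ := by
      refine Real.exp_le_exp.2 ?_
      calc ⟪x, z⟫ ≤ ‖x‖ * ‖z‖ := real_inner_le_norm x z
      _ ≤ 1 * ‖z‖ := by
          have := mem_ball_zero_iff.1 hx
          nlinarith [norm_nonneg z]
      _ = ‖z‖ := one_mul _
    have h2 := exp_norm_le_sum n z
    have h3 : (0:ℝ) ≤ M z := hMnn z
    have h4 : Real.exp ⟪x, z⟫ ≤ ∑ S ∈ Finset.univ.powerset, Real.exp ⟪sgnVec n S, z⟫ :=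
      h1.trans h2
    have h5 : (0:ℝ) ≤ ∑ S ∈ Finset.univ.powerset, Real.exp ⟪sgnVec n S, z⟫ :=
      Finset.sum_nonneg fun S _ => (Real.exp_pos _).le
    calc M z * Real.exp ⟪x, z⟫ * ‖z‖
        ≤ (M z * ∑ S ∈ Finset.univ.powerset, Real.exp ⟪sgnVec n S, z⟫) * (1 + ‖z‖) := by
          refine mul_le_mul (mul_le_mul_of_nonneg_left h4 h3) (by linarith [norm_nonneg z])
            (norm_nonneg z) (mul_nonneg h3 h5)
    _ = M z * (1 + ‖z‖) * ∑ S ∈ Finset.univ.powerset, Real.exp ⟪sgnVec n S, z⟫ := by ring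
  · -- bound_integrable
    exact integrable_finset_sum _ (fun S _ => hMexp (sgnVec n S))
  · -- h_diff
    refine Filter.Eventually.of_forall fun z => fun x hx => ?_
    have hfun : (fun p : EuclideanSpace ℝ (Fin n) => M z * Real.exp ⟪p, z⟫)
        = fun p => M z * Real.exp (innerSL ℝ z p) := by
      funext p; rw [real_inner_comm]; rfl
    rw [hfun]
    have h2 := (((innerSL ℝ z).hasFDerivAt (x := x)).exp).const_mul (M z)
    refine h2.congr_fderiv ?_
    simp only [smul_smul, innerSL_apply_apply]
    rw [real_inner_comm x z]

/-- the Canonical Equation: if `U` solves the limiting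
Hamilton–Jacobi equation `∂_tU = −Λ(y, ∫M(z)e^{∇_yU·z}dz)` and `ȳ(t)` is a
nondegenerate critical point of `U(t,·)`, then
`ȳ'(t) = (D²_yU)⁻¹·∇_yΛ(ȳ,1) + ∂_ηΛ(ȳ,1)·∫M(z)z dz`. -/
theorem canonical_equation
    (n : ℕ) (hn : 1 ≤ n) (T : ℝ) (hT : 0 < T)
    (Λ : EuclideanSpace ℝ (Fin n) → ℝ → ℝ)
    (hΛ : ContDiff ℝ 1 (fun p : EuclideanSpace ℝ (Fin n) × ℝ => Λ p.1 p.2))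
    (M : EuclideanSpace ℝ (Fin n) → ℝ)
    (hMmeas : Measurable M) (hMnn : ∀ z, 0 ≤ M z)
    (hMprob : ∫ z, M z = 1)
    (hMexp : ∀ p : EuclideanSpace ℝ (Fin n),
      Integrable (fun z => M z * (1 + ‖z‖) * Real.exp ⟪p, z⟫))
    (U : ℝ → EuclideanSpace ℝ (Fin n) → ℝ)
    (hU : ContDiff ℝ 2 (fun q : ℝ × EuclideanSpace ℝ (Fin n) => U q.1 q.2))
    (η : ℝ → EuclideanSpace ℝ (Fin n) → ℝ)
    (hη : ∀ t y, η t y = ∫ z, M z * Real.exp ⟪gradient (U t) y, z⟫)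
    (hHJ : ∀ t ∈ Icc (0:ℝ) T, ∀ y, deriv (fun s => U s y) t = -Λ y (η t y))
    (ybar ybar' : ℝ → EuclideanSpace ℝ (Fin n))
    (hybar : ∀ t ∈ Icc (0:ℝ) T, HasDerivWithinAt ybar (ybar' t) (Icc 0 T) t)
    (hybar'cont : ContinuousOn ybar' (Icc 0 T))
    (hcrit : ∀ t ∈ Icc (0:ℝ) T, gradient (U t) (ybar t) = 0)
    (hinv : ∀ t ∈ Icc (0:ℝ) T,
      IsUnit (fderiv ℝ (fun y => gradient (U t) y) (ybar t))) :
    ∀ t ∈ Icc (0:ℝ) T,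
      ybar' t =
        (Ring.inverse (fderiv ℝ (fun y => gradient (U t) y) (ybar t)))
          (gradient (fun y => Λ y 1) (ybar t))
        + deriv (Λ (ybar t)) 1 • ∫ z, M z • z := by
  intro t ht
  -- abbreviations
  let E := EuclideanSpace ℝ (Fin n)
  let f : ℝ × E → ℝ := fun q => U q.1 q.2
  have hf : ContDiff ℝ 2 f := hU
  have hf_diff : Differentiable ℝ f := hf.differentiable two_ne_zero
  let Φ : ℝ × E → (ℝ × E) →L[ℝ] ℝ := fderiv ℝ f
  have hΦ : ContDiff ℝ 1 Φ := hf.fderiv_right (by norm_num)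
  have hΦdiff : Differentiable ℝ Φ := hΦ.differentiable one_ne_zero
  have hA : ∀ q, HasFDerivAt Φ (fderiv ℝ Φ q) q := fun q => (hΦdiff q).hasFDerivAt
  let B : (ℝ × E) →L[ℝ] (ℝ × E) →L[ℝ] ℝ := fderiv ℝ Φ (t, ybar t)
  have hsymm : ∀ v w, B v w = B w v :=
    second_derivative_symmetric (fun y => (hf_diff y).hasFDerivAt) (hA (t, ybar t))
  -- the "take the y-part of a functional, as a vector" continuous linear map
  let ι : E →L[ℝ] ℝ × E := ContinuousLinearMap.inr ℝ ℝ E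
  let T' : ((ℝ × E) →L[ℝ] ℝ) →L[ℝ] E :=
    ((InnerProductSpace.toDual ℝ E).symm.toContinuousLinearEquiv :
        StrongDual ℝ E ≃L[ℝ] E).toContinuousLinearMap.comp
      ((ContinuousLinearMap.compL ℝ E (ℝ × E) ℝ).flip ι)
  have hT'app : ∀ (L : (ℝ × E) →L[ℝ] ℝ),
      T' L = (InnerProductSpace.toDual ℝ E).symm (L.comp ι) := fun L => rfl
  have hT'inner : ∀ (L : (ℝ × E) →L[ℝ] ℝ) (w : E), ⟪T' L, w⟫ = L (0, w) := by
    intro L w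
    rw [hT'app, InnerProductSpace.toDual_symm_apply]
    rfl
  -- gradient in terms of Φ
  have hgrad : ∀ s y, gradient (U s) y = T' (Φ (s, y)) := by
    intro s y
    have h1 : HasFDerivAt (fun y' : E => (s, y')) ι y :=
      ((hasFDerivAt_const s y).prodMk (hasFDerivAt_id y)).congr_fderiv
        (by ext v <;> rfl)
    have h2 : HasFDerivAt (U s) ((Φ (s, y)).comp ι) y :=
      ((hf_diff (s, y)).hasFDerivAt).comp y h1
    rw [hT'app]
    show (InnerProductSpace.toDual ℝ E).symm (fderiv ℝ (U s) y) = _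
    rw [h2.fderiv]
  -- the Hessian operator
  have hHfd : HasFDerivAt (fun y => gradient (U t) y)
      (T'.comp (B.comp ι)) (ybar t) := by
    have h1 : HasFDerivAt (fun y' : E => ((t : ℝ), y')) ι (ybar t) :=
      ((hasFDerivAt_const t (ybar t)).prodMk (hasFDerivAt_id (ybar t))).congr_fderiv
        (by ext v <;> rfl)
    have h2 : HasFDerivAt (fun y : E => T' (Φ (t, y))) (T'.comp (B.comp ι)) (ybar t) :=
      T'.hasFDerivAt.comp _ (((hA (t, ybar t)).comp _ h1))
    exact h2.congr_of_eventuallyEq (Filter.Eventually.of_forall fun y => (hgrad t y))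
  set H : E →L[ℝ] E := T'.comp (B.comp ι) with hH
  have hHinner : ∀ v w : E, ⟪H v, w⟫ = B (0, v) (0, w) := by
    intro v w
    show ⟪T' (B (ι v)), w⟫ = _
    rw [hT'inner]
    rfl
  have hHeq : fderiv ℝ (fun y => gradient (U t) y) (ybar t) = H := hHfd.fderiv
  -- step (c): differentiate gradient (U s) (ybar s) = 0 along the curve
  have hc : ∀ w : E, B (1, ybar' t) (0, w) = 0 := by
    intro w
    have hcurve : HasDerivWithinAt (fun s => ((s : ℝ), ybar s)) (1, ybar' t) (Icc 0 T) t :=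
      (hasDerivWithinAt_id t _).prodMk (hybar t ht)
    have hjoint : HasFDerivAt (fun q : ℝ × E => T' (Φ q)) (T'.comp B) (t, ybar t) :=
      T'.hasFDerivAt.comp _ (hA (t, ybar t))
    have h1 : HasDerivWithinAt (fun s => T' (Φ (s, ybar s)))
        ((T'.comp B) (1, ybar' t)) (Icc 0 T) t :=
      by have := hjoint.comp_hasDerivWithinAt t hcurve; exact this
    have h2 : HasDerivWithinAt (fun s => T' (Φ (s, ybar s))) 0 (Icc 0 T) t := by
      refine (hasDerivWithinAt_const t _ (0:E)).congr (fun s hs => ?_) ?_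
      · rw [← hgrad]; exact hcrit s hs
      · rw [← hgrad]; exact hcrit t ht
    have h3 : (T'.comp B) (1, ybar' t) = 0 := by
      have e1 := h1.derivWithin (uniqueDiffOn_Icc hT t ht)
      have e2 := h2.derivWithin (uniqueDiffOn_Icc hT t ht)
      rw [e1] at e2; exact e2.symm ▸ rfl
    have h4 : ⟪T' (B (1, ybar' t)), w⟫ = 0 := by
      show ⟪(T'.comp B) (1, ybar' t), w⟫ = 0
      rw [h3, inner_zero_left]
    rw [hT'inner] at h4
    exact h4
  -- step (e): differentiate the HJ equation in y
  let L : (E × ℝ) →L[ℝ] ℝ := fderiv ℝ (fun p : E × ℝ => Λ p.1 p.2) (ybar t, 1)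
  have hΛd : HasFDerivAt (fun p : E × ℝ => Λ p.1 p.2) L (ybar t, 1) :=
    ((hΛ.differentiable one_ne_zero) _).hasFDerivAt
  have hη1 : η t (ybar t) = 1 := by
    rw [hη, hcrit t ht]
    simpa using hMprob
  let Dh : E →L[ℝ] ℝ := ∫ z, M z • (innerSL ℝ z)
  have hkey : HasFDerivAt (fun p : E => ∫ z, M z * Real.exp ⟪p, z⟫) Dh
      (gradient (U t) (ybar t)) := by
    rw [hcrit t ht]; exact key_hasFDerivAt n M hMmeas hMnn hMexp
  have hη_fd : HasFDerivAt (fun y => η t y) (Dh.comp H) (ybar t) := by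
    have h1 : HasFDerivAt
        ((fun p : E => ∫ z, M z * Real.exp ⟪p, z⟫) ∘ (fun y => gradient (U t) y))
        (Dh.comp H) (ybar t) := hkey.comp _ hHfd
    exact h1.congr_of_eventuallyEq (Filter.Eventually.of_forall fun y => (hη t y))
  have h1ι : HasFDerivAt (fun y' : E => ((t : ℝ), y')) ι (ybar t) :=
    ((hasFDerivAt_const t (ybar t)).prodMk (hasFDerivAt_id (ybar t))).congr_fderiv
      (by ext v <;> rfl)
  let ap : ((ℝ × E) →L[ℝ] ℝ) →L[ℝ] ℝ := ContinuousLinearMap.apply ℝ ℝ ((1:ℝ), (0:E))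
  have hP : HasFDerivAt (fun y : E => Φ (t, y) ((1:ℝ), (0:E)))
      (ap.comp (B.comp ι)) (ybar t) :=
    ap.hasFDerivAt.comp _ ((hA (t, ybar t)).comp _ h1ι)
  have hPQ : ∀ y : E, Φ (t, y) ((1:ℝ), (0:E)) = -Λ y (η t y) := by
    intro y
    have hd : HasDerivAt (fun s => f (s, y)) (Φ (t, y) ((1:ℝ), (0:E))) t :=
      ((hf_diff (t, y)).hasFDerivAt).comp_hasDerivAt (f := fun s => (s, y)) t
        ((hasDerivAt_id t).prodMk (hasDerivAt_const t y))
    have := hd.deriv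
    rw [← hHJ t ht y]
    exact this.symm
  have hΛd' : HasFDerivAt (fun p : E × ℝ => Λ p.1 p.2) L (ybar t, η t (ybar t)) := by
    rw [hη1]; exact hΛd
  have hQ : HasFDerivAt (fun y : E => -Λ y (η t y))
      (-(L.comp ((ContinuousLinearMap.id ℝ E).prod (Dh.comp H)))) (ybar t) := by
    have h2 : HasFDerivAt (fun y : E => (y, η t y))
        ((ContinuousLinearMap.id ℝ E).prod (Dh.comp H)) (ybar t) :=
      (hasFDerivAt_id (ybar t)).prodMk hη_fd
    exact (HasFDerivAt.comp (x := ybar t) hΛd' h2).neg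
  have hQ' : HasFDerivAt (fun y : E => Φ (t, y) ((1:ℝ), (0:E)))
      (-(L.comp ((ContinuousLinearMap.id ℝ E).prod (Dh.comp H)))) (ybar t) :=
    hQ.congr_of_eventuallyEq (Filter.Eventually.of_forall fun y => (hPQ y))
  have he : ∀ w : E, B (0, w) ((1:ℝ), (0:E)) = -(L (w, Dh (H w))) := by
    intro w
    have h3 := hP.unique hQ'
    have h4 := congrArg (fun (Z : E →L[ℝ] ℝ) => Z w) h3
    simpa [ap, ι] using h4
  -- compute Dh (H w) = ⟪H m, w⟫ where m = ∫ M z • z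
  let m : E := ∫ z, M z • z
  have hDh : ∀ w : E, Dh (H w) = ⟪H m, w⟫ := by
    intro w
    have h1 : Dh (H w) = ∫ z, (M z • (innerSL ℝ z)) (H w) :=
      ContinuousLinearMap.integral_apply (integrable_MinnerSL n M hMmeas hMnn hMexp) (H w)
    have h2 : ∀ z : E, (M z • (innerSL ℝ z)) (H w) = ⟪H w, M z • z⟫ := by
      intro z
      rw [real_inner_smul_right]
      show M z * ⟪z, H w⟫ = M z * ⟪H w, z⟫
      rw [real_inner_comm]
    have h3 : Dh (H w) = ⟪H w, m⟫ := by
      rw [h1]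
      rw [show (fun z => (M z • (innerSL ℝ z)) (H w)) = fun z => ⟪H w, M z • z⟫ from
        funext h2]
      exact integral_inner (integrable_Mz n M hMmeas hMnn hMexp) (H w)
    rw [h3, hHinner w m, hsymm (0, w) (0, m), ← hHinner m w]
  -- the gradient and partial derivative of Λ
  have hgΛ : ∀ w : E, ⟪gradient (fun y => Λ y 1) (ybar t), w⟫ = L (w, 0) := by
    intro w
    have hfd : HasFDerivAt (fun y : E => Λ y 1) (L.comp (ContinuousLinearMap.inl ℝ E ℝ))
        (ybar t) := by
      have hinl : HasFDerivAt (fun y : E => (y, (1:ℝ))) (ContinuousLinearMap.inl ℝ E ℝ)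
          (ybar t) :=
        ((hasFDerivAt_id (ybar t)).prodMk (hasFDerivAt_const 1 (ybar t))).congr_fderiv
          (by ext v <;> rfl)
      exact HasFDerivAt.comp (x := ybar t) hΛd hinl
    show ⟪(InnerProductSpace.toDual ℝ E).symm (fderiv ℝ (fun y => Λ y 1) (ybar t)), w⟫ = _
    rw [hfd.fderiv, InnerProductSpace.toDual_symm_apply]
    rfl
  have hdΛ : deriv (Λ (ybar t)) 1 = L ((0:E), (1:ℝ)) := by
    have hd : HasDerivAt (fun s : ℝ => Λ (ybar t) s) (L ((0:E), (1:ℝ))) 1 :=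
      hΛd.comp_hasDerivAt 1 ((hasDerivAt_const 1 (ybar t)).prodMk (hasDerivAt_id 1))
    exact hd.deriv
  -- linear decomposition of L
  have hLdec : ∀ (w : E) (s : ℝ), L (w, s) = L (w, 0) + s * L ((0:E), (1:ℝ)) := by
    intro w s
    have h1 : ((w, s) : E × ℝ) = (w, 0) + s • ((0:E), (1:ℝ)) := by
      ext <;> simp
    rw [h1, map_add, ContinuousLinearMap.map_smul, smul_eq_mul]
  -- assemble
  have main : ∀ w : E, ⟪H (ybar' t), w⟫
      = ⟪gradient (fun y => Λ y 1) (ybar t) + (deriv (Λ (ybar t)) 1) • (H m), w⟫ := by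
    intro w
    have hb : B ((1:ℝ), (0:E)) (0, w) + B (0, ybar' t) (0, w) = 0 := by
      have h1 : ((1:ℝ), ybar' t) = ((1:ℝ), (0:E)) + ((0:ℝ), ybar' t) := by ext <;> simp
      have h2 := hc w
      rw [h1, map_add] at h2
      simpa using h2
    have hss : B ((1:ℝ), (0:E)) (0, w) = B (0, w) ((1:ℝ), (0:E)) :=
      hsymm _ _
    rw [inner_add_left, real_inner_smul_left]
    have h5 : ⟪H (ybar' t), w⟫ = - B ((1:ℝ), (0:E)) (0, w) := by
      rw [hHinner]; linarith [hb]
    rw [h5, hss, he w, hLdec w (Dh (H w)), hDh w, hgΛ w, hdΛ]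
    ring_nf
  have hfin : H (ybar' t) = gradient (fun y => Λ y 1) (ybar t)
      + (deriv (Λ (ybar t)) 1) • (H m) := ext_inner_right ℝ main
  have hHunit : IsUnit H := hHeq ▸ hinv t ht
  have hR : ∀ x : E, (Ring.inverse H) (H x) = x := by
    intro x
    have h1 : Ring.inverse H * H = 1 := Ring.inverse_mul_cancel _ hHunit
    rw [← ContinuousLinearMap.mul_apply, h1, ContinuousLinearMap.one_apply]
  rw [hHeq]
  calc ybar' t = (Ring.inverse H) (H (ybar' t)) := (hR _).symm
  _ = (Ring.inverse H) (gradient (fun y => Λ y 1) (ybar t))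
      + (deriv (Λ (ybar t)) 1) • (Ring.inverse H) (H m) := by
        rw [hfin, map_add, ContinuousLinearMap.map_smul]
  _ = _ := by rw [hR m]
end

section
/- Under the same hypotheses as the Canonical Equation (Λ : ℝⁿ × (0,∞) → ℝ C¹; M a probability density on ℝⁿ with ∫M(z)(1+|z|)e^{p·z}dz < ∞ for all p; U : [0,T] × ℝⁿ → ℝ C² solving ∂_tU(t,y) = −Λ(y, ∫M(z)e^{∇_yU(t,y)·z}dz); ȳ : [0,T] → ℝⁿ C¹ with ∇_yU(t,ȳ(t)) = 0 and D²_yU(t,ȳ(t)) invertible), define ρ(t) := ∂_tU(t, ȳ(t)). Then ρ(t) = −Λ(ȳ(t), 1) for all t ∈ [0,T]; moreover ρ is continuously differentiable with ρ'(t) = −∇_yΛ(ȳ(t),1) · [(D²_yU(t,ȳ(t)))⁻¹ · ∇_yΛ(ȳ(t),1)] − ∂_ηΛ(ȳ(t),1) · (∫M(z)·z dz) · ∇_yΛ(ȳ(t),1). In particular, if M is even (so ∫M(z)·z dz = 0) and D²_yU(t,ȳ(t)) is negative definite, then ρ'(t) ≥ 0. -/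
set_option synthInstance.maxHeartbeats 1000000
set_option maxHeartbeats 2000000

open MeasureTheory Set
open scoped RealInnerProductSpace

noncomputable section PopAuxSec

/-- `toDual.symm` as a continuous `ℝ`-linear map. -/
noncomputable def kappaL (E : Type*) [NormedAddCommGroup E] [InnerProductSpace ℝ E]
    [CompleteSpace E] : (E →L[ℝ] ℝ) →L[ℝ] E :=
  LinearMap.mkContinuous
    { toFun := fun ℓ => (InnerProductSpace.toDual ℝ E).symm ℓ
      map_add' := fun x y => map_add _ x y
      map_smul' := fun c x => by
        simp [LinearIsometryEquiv.map_smulₛₗ] }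
    1 (fun ℓ => by simp)

section kappa
variable {E : Type*} [NormedAddCommGroup E] [InnerProductSpace ℝ E] [CompleteSpace E]

lemma inner_kappaL (ℓ : E →L[ℝ] ℝ) (v : E) : ⟪kappaL E ℓ, v⟫ = ℓ v := by
  simpa [kappaL, LinearMap.mkContinuous] using
    (InnerProductSpace.toDual_symm_apply (𝕜 := ℝ) (E := E) (x := v) (y := ℓ))

lemma gradient_eq_kappaL (f : E → ℝ) (x : E) : gradient f x = kappaL E (fderiv ℝ f x) := rfl

end kappa

namespace PopAux

variable {n : ℕ}

local notation "E" => EuclideanSpace ℝ (Fin n)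

def sgn (ε : Fin n → Bool) : EuclideanSpace ℝ (Fin n) :=
  WithLp.toLp 2 (fun i => if ε i then (1:ℝ) else -1)

lemma exp_norm_le (z : E) :
    Real.exp ‖z‖ ≤ ∑ ε : Fin n → Bool, Real.exp ⟪sgn ε, z⟫ := by
  have h1 : ‖z‖ ≤ ∑ i, |z i| := by
    rw [EuclideanSpace.norm_eq]
    have h2 : ∑ i, ‖z i‖ ^ 2 ≤ (∑ i, |z i|) ^ 2 := by
      simp only [Real.norm_eq_abs]
      calc ∑ i, |z i| ^ 2 = ∑ i, |z i| * |z i| := by simp [sq]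
        _ ≤ ∑ i, |z i| * (∑ j, |z j|) := by
            refine Finset.sum_le_sum fun i _ => ?_
            refine mul_le_mul_of_nonneg_left ?_ (abs_nonneg _)
            exact Finset.single_le_sum (fun j _ => abs_nonneg (z j)) (Finset.mem_univ i)
        _ = (∑ i, |z i|) ^ 2 := by rw [← Finset.sum_mul, sq]
    calc Real.sqrt (∑ i, ‖z i‖ ^ 2) ≤ Real.sqrt ((∑ i, |z i|) ^ 2) := Real.sqrt_le_sqrt h2
      _ = abs (∑ i, |z i|) := Real.sqrt_sq_eq_abs _
      _ = ∑ i, |z i| := abs_of_nonneg (Finset.sum_nonneg fun i _ => abs_nonneg _)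
  set ε₀ : Fin n → Bool := fun i => decide (0 ≤ z i) with hε₀
  have h3 : ⟪sgn ε₀, z⟫ = ∑ i, |z i| := by
    rw [PiLp.inner_apply]
    refine Finset.sum_congr rfl fun i _ => ?_
    simp only [sgn, hε₀, RCLike.inner_apply, conj_trivial]
    by_cases h : 0 ≤ z i
    · simp [h, abs_of_nonneg h]
    · simp [h, abs_of_neg (lt_of_not_ge h)]
  calc Real.exp ‖z‖ ≤ Real.exp ⟪sgn ε₀, z⟫ := by
        rw [h3]; exact Real.exp_le_exp.2 h1
    _ ≤ ∑ ε : Fin n → Bool, Real.exp ⟪sgn ε, z⟫ := by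
        exact Finset.single_le_sum (f := fun ε : Fin n → Bool => Real.exp ⟪sgn ε, z⟫)
          (fun ε _ => (Real.exp_pos _).le) (Finset.mem_univ ε₀)

lemma psi_hasFDerivAt (M : E → ℝ) (hMmeas : Measurable M) (hMnn : ∀ z, 0 ≤ M z)
    (hMexp : ∀ p : E, Integrable (fun z => M z * (1 + ‖z‖) * Real.exp ⟪p, z⟫)) :
    HasFDerivAt (fun p : E => ∫ z, M z * Real.exp ⟪p, z⟫)
      (innerSL ℝ (∫ z, M z • z)) 0 := by
  have hbase := hMexp 0
  simp only [inner_zero_left, Real.exp_zero, mul_one] at hbase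
  have hMint : Integrable M := by
    refine hbase.mono hMmeas.aestronglyMeasurable (Filter.Eventually.of_forall fun z => ?_)
    have h1 : (0:ℝ) ≤ 1 + ‖z‖ := by positivity
    rw [Real.norm_eq_abs, Real.norm_eq_abs, abs_of_nonneg (hMnn z),
      abs_of_nonneg (mul_nonneg (hMnn z) (by positivity))]
    nlinarith [hMnn z, norm_nonneg z]
  have hMzint : Integrable (fun z : E => M z • z) := by
    refine hbase.mono' (hMmeas.aestronglyMeasurable.smul aestronglyMeasurable_id)
      (Filter.Eventually.of_forall fun z => ?_)
    rw [norm_smul, Real.norm_eq_abs, abs_of_nonneg (hMnn z)]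
    nlinarith [hMnn z, norm_nonneg z]
  set F : E → E → ℝ := fun p z => M z * Real.exp ⟪z, p⟫ with hF
  set F' : E → E → (EuclideanSpace ℝ (Fin n) →L[ℝ] ℝ) :=
    fun p z => (M z * Real.exp ⟪z, p⟫) • innerSL ℝ z with hF'
  have hinner_meas : ∀ p : E, Measurable fun z : E => (⟪z, p⟫ : ℝ) := fun p =>
    (continuous_id.inner continuous_const).measurable
  have hinnerSLcont : Continuous fun z : E => (innerSL ℝ z : EuclideanSpace ℝ (Fin n) →L[ℝ] ℝ) :=
    (innerSL ℝ).continuous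
  have hF'int : Integrable (F' 0) := by
    refine hbase.mono'
      (((hMmeas.mul ((Real.measurable_exp.comp (hinner_meas 0)))).aestronglyMeasurable).smul
        hinnerSLcont.aestronglyMeasurable)
      (Filter.Eventually.of_forall fun z => ?_)
    simp only [hF']
    rw [norm_smul (M z * Real.exp (⟪z, (0:E)⟫:ℝ)) (innerSL ℝ z), Real.norm_eq_abs,
      inner_zero_right, Real.exp_zero, mul_one, abs_of_nonneg (hMnn z), innerSL_apply_norm]
    nlinarith [hMnn z, norm_nonneg z]
  have key : HasFDerivAt (fun p : E => ∫ z, F p z) (∫ z, F' 0 z) 0 := by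
    refine hasFDerivAt_integral_of_dominated_of_fderiv_le (s := Metric.ball 0 1)
      (bound := fun z : E => M z * (1 + ‖z‖) * ∑ ε : Fin n → Bool, Real.exp ⟪sgn ε, z⟫) (Metric.ball_mem_nhds 0 one_pos)
      (Filter.Eventually.of_forall fun p =>
        ((hMmeas.mul (Real.measurable_exp.comp (hinner_meas p))).aestronglyMeasurable))
      ?_ hF'int.aestronglyMeasurable
      (Filter.Eventually.of_forall fun z p hp => ?_)
      ?_
      (Filter.Eventually.of_forall fun z p hp => ?_)
    · simpa [hF, inner_zero_right] using hMint
    · show ‖F' p z‖ ≤ M z * (1 + ‖z‖) * ∑ ε : Fin n → Bool, Real.exp ⟪sgn ε, z⟫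
      rw [hF', norm_smul (M z * Real.exp (⟪z, p⟫:ℝ)) (innerSL ℝ z), Real.norm_eq_abs,
        abs_of_nonneg (mul_nonneg (hMnn z) (Real.exp_pos _).le), innerSL_apply_norm]
      have h1 : Real.exp ⟪z, p⟫ ≤ ∑ ε : Fin n → Bool, Real.exp ⟪sgn ε, z⟫ := by
        refine le_trans ?_ (exp_norm_le z)
        refine Real.exp_le_exp.2 ?_
        calc ⟪z, p⟫ ≤ ‖z‖ * ‖p‖ := real_inner_le_norm z p
          _ ≤ ‖z‖ * 1 := by
              refine mul_le_mul_of_nonneg_left ?_ (norm_nonneg z)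
              simpa using (mem_ball_zero_iff.mp hp).le
          _ = ‖z‖ := mul_one _
      have hS : (0:ℝ) ≤ ∑ ε : Fin n → Bool, Real.exp ⟪sgn ε, z⟫ :=
        Finset.sum_nonneg fun ε _ => (Real.exp_pos _).le
      calc M z * Real.exp ⟪z, p⟫ * ‖z‖
          = M z * (Real.exp ⟪z, p⟫ * ‖z‖) := by ring
        _ ≤ M z * ((∑ ε : Fin n → Bool, Real.exp ⟪sgn ε, z⟫) * (1 + ‖z‖)) :=
            mul_le_mul_of_nonneg_left
              (mul_le_mul h1 (by linarith [norm_nonneg z]) (norm_nonneg z) hS) (hMnn z)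
        _ = M z * (1 + ‖z‖) * ∑ ε : Fin n → Bool, Real.exp ⟪sgn ε, z⟫ := by ring
    · have : (fun z : E => M z * (1 + ‖z‖) * ∑ ε : Fin n → Bool, Real.exp ⟪sgn ε, z⟫)
          = fun z : E => ∑ ε : Fin n → Bool, M z * (1 + ‖z‖) * Real.exp ⟪sgn ε, z⟫ := by
        funext z; rw [Finset.mul_sum]
      rw [this]
      exact integrable_finset_sum _ fun ε _ => hMexp (sgn ε)
    · have h1 : HasFDerivAt (fun p : E => (⟪z, p⟫ : ℝ)) (innerSL ℝ z) p :=
        (innerSL ℝ z).hasFDerivAt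
      have h2 := (Real.hasDerivAt_exp (⟪z, p⟫ : ℝ)).comp_hasFDerivAt p h1
      have h3 := h2.const_mul (M z)
      simpa [hF, hF', smul_smul] using h3
  have hfun : (fun p : E => ∫ z, M z * Real.exp ⟪p, z⟫) = fun p : E => ∫ z, F p z := by
    funext p
    simp_rw [hF, real_inner_comm]
  have hval : (∫ z, F' 0 z) = innerSL ℝ (∫ z, M z • z) := by
    refine ContinuousLinearMap.ext fun v => ?_
    rw [ContinuousLinearMap.integral_apply hF'int]
    have h1 : ∀ z : E, F' 0 z v = ⟪v, M z • z⟫ := by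
      intro z
      simp only [hF', inner_zero_right, Real.exp_zero, mul_one,
        ContinuousLinearMap.coe_smul', Pi.smul_apply, innerSL_apply_apply, smul_eq_mul,
        real_inner_smul_right]
      rw [real_inner_comm]
    simp_rw [h1]
    rw [integral_inner hMzint, innerSL_apply_apply, real_inner_comm]
  rw [hfun, ← hval]
  exact key

end PopAux

end PopAuxSec

/-- the limiting population size `ρ(t) = ∂_tU(t,ȳ(t))`
satisfies `ρ(t) = −Λ(ȳ(t),1)`, is continuously differentiable with
`ρ' = −∇_yΛ·(D²_yU)⁻¹∇_yΛ − ∂_ηΛ·(∫Mz dz)·∇_yΛ`, and is nondecreasing when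
`M` is even and `D²_yU(t,ȳ(t))` is negative definite. -/
theorem population_size_dynamics
    (n : ℕ) (hn : 1 ≤ n) (T : ℝ) (hT : 0 < T)
    (Λ : EuclideanSpace ℝ (Fin n) → ℝ → ℝ)
    (hΛ : ContDiff ℝ 1 (fun p : EuclideanSpace ℝ (Fin n) × ℝ => Λ p.1 p.2))
    (M : EuclideanSpace ℝ (Fin n) → ℝ)
    (hMmeas : Measurable M) (hMnn : ∀ z, 0 ≤ M z)
    (hMprob : ∫ z, M z = 1)
    (hMexp : ∀ p : EuclideanSpace ℝ (Fin n),
      Integrable (fun z => M z * (1 + ‖z‖) * Real.exp ⟪p, z⟫))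
    (U : ℝ → EuclideanSpace ℝ (Fin n) → ℝ)
    (hU : ContDiff ℝ 2 (fun q : ℝ × EuclideanSpace ℝ (Fin n) => U q.1 q.2))
    (η : ℝ → EuclideanSpace ℝ (Fin n) → ℝ)
    (hη : ∀ t y, η t y = ∫ z, M z * Real.exp ⟪gradient (U t) y, z⟫)
    (hHJ : ∀ t ∈ Icc (0:ℝ) T, ∀ y, deriv (fun s => U s y) t = -Λ y (η t y))
    (ybar ybar' : ℝ → EuclideanSpace ℝ (Fin n))
    (hybar : ∀ t ∈ Icc (0:ℝ) T, HasDerivWithinAt ybar (ybar' t) (Icc 0 T) t)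
    (hybar'cont : ContinuousOn ybar' (Icc 0 T))
    (hcrit : ∀ t ∈ Icc (0:ℝ) T, gradient (U t) (ybar t) = 0)
    (hinv : ∀ t ∈ Icc (0:ℝ) T,
      IsUnit (fderiv ℝ (fun y => gradient (U t) y) (ybar t)))
    (ρ : ℝ → ℝ)
    (hρ : ∀ t : ℝ, ρ t = deriv (fun s => U s (ybar t)) t) :
    (∀ t ∈ Icc (0:ℝ) T, ρ t = -Λ (ybar t) 1) ∧
    ∃ ρ' : ℝ → ℝ, ContinuousOn ρ' (Icc 0 T) ∧
      (∀ t ∈ Icc (0:ℝ) T,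
        HasDerivWithinAt ρ (ρ' t) (Icc 0 T) t ∧
        ρ' t =
          -⟪gradient (fun y => Λ y 1) (ybar t),
              (Ring.inverse (fderiv ℝ (fun y => gradient (U t) y) (ybar t)))
                (gradient (fun y => Λ y 1) (ybar t))⟫
          - deriv (Λ (ybar t)) 1 *
              ⟪∫ z, M z • z, gradient (fun y => Λ y 1) (ybar t)⟫) ∧
      (((∫ z, M z • z) = 0 ∧
          ∀ t ∈ Icc (0:ℝ) T, ∀ v : EuclideanSpace ℝ (Fin n), v ≠ 0 →
            ⟪(fderiv ℝ (fun y => gradient (U t) y) (ybar t)) v, v⟫ < 0) →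
        ∀ t ∈ Icc (0:ℝ) T, 0 ≤ ρ' t) := by
  classical
  -- basic differentiability facts
  have hFd : Differentiable ℝ (fun q : ℝ × EuclideanSpace ℝ (Fin n) => U q.1 q.2) :=
    hU.differentiable (by norm_num)
  have hC1 : ContDiff ℝ 1 (fderiv ℝ (fun q : ℝ × EuclideanSpace ℝ (Fin n) => U q.1 q.2)) :=
    hU.fderiv_right (by norm_num)
  have hUts : ∀ (t : ℝ) (y : EuclideanSpace ℝ (Fin n)),
      HasDerivAt (fun s => U s y)
        (fderiv ℝ (fun q : ℝ × EuclideanSpace ℝ (Fin n) => U q.1 q.2) (t, y) (1, 0)) t :=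
    fun t y => by
      have h := (hFd (t, y)).hasFDerivAt.comp_hasDerivAt t
        ((hasDerivAt_id t).prodMk (hasDerivAt_const t y))
      exact h
  -- η at concentration point is 1
  have hη1 : ∀ t ∈ Icc (0:ℝ) T, η t (ybar t) = 1 := by
    intro t ht
    rw [hη, hcrit t ht]
    simpa using hMprob
  have part1 : ∀ t ∈ Icc (0:ℝ) T, ρ t = -Λ (ybar t) 1 := by
    intro t ht
    rw [hρ, hHJ t ht (ybar t), hη1 t ht]
  -- the E-dual valued derivative field
  set rc : ((ℝ × EuclideanSpace ℝ (Fin n)) →L[ℝ] ℝ) →L[ℝ]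
      (EuclideanSpace ℝ (Fin n) →L[ℝ] ℝ) :=
    (ContinuousLinearMap.compL ℝ (EuclideanSpace ℝ (Fin n))
      (ℝ × EuclideanSpace ℝ (Fin n)) ℝ).flip
        (ContinuousLinearMap.inr ℝ ℝ (EuclideanSpace ℝ (Fin n))) with hrc
  set ℓ : ℝ × EuclideanSpace ℝ (Fin n) → (EuclideanSpace ℝ (Fin n) →L[ℝ] ℝ) :=
    fun q => rc (fderiv ℝ (fun q : ℝ × EuclideanSpace ℝ (Fin n) => U q.1 q.2) q) with hℓdef
  have hℓC1 : ContDiff ℝ 1 ℓ := rc.contDiff.comp hC1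
  have hℓd : Differentiable ℝ ℓ := hℓC1.differentiable one_ne_zero
  have hUty : ∀ (t : ℝ) (y : EuclideanSpace ℝ (Fin n)), HasFDerivAt (U t) (ℓ (t, y)) y :=
    fun t y => (hFd (t, y)).hasFDerivAt.comp y (hasFDerivAt_prodMk_right t y)
  have hgradeq : ∀ (t : ℝ) (y : EuclideanSpace ℝ (Fin n)),
      gradient (U t) y = kappaL (EuclideanSpace ℝ (Fin n)) (ℓ (t, y)) := fun t y => by
    rw [gradient_eq_kappaL, (hUty t y).fderiv]
  have hℓ0 : ∀ s ∈ Icc (0:ℝ) T, ℓ (s, ybar s) = 0 := by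
    intro s hs
    have h0 := hgradeq s (ybar s)
    rw [hcrit s hs] at h0
    ext v
    have h2 := inner_kappaL (ℓ (s, ybar s)) v
    rw [← h0, inner_zero_left] at h2
    simpa using h2.symm
  have hAhas : ∀ t : ℝ, HasFDerivAt (fun y => gradient (U t) y)
      ((kappaL (EuclideanSpace ℝ (Fin n))).comp ((fderiv ℝ ℓ (t, ybar t)).comp
        (ContinuousLinearMap.inr ℝ ℝ (EuclideanSpace ℝ (Fin n))))) (ybar t) := by
    intro t
    have h1 := (kappaL (EuclideanSpace ℝ (Fin n))).hasFDerivAt.comp (ybar t)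
      ((hℓd (t, ybar t)).hasFDerivAt.comp (ybar t) (hasFDerivAt_prodMk_right t (ybar t)))
    have h2 : (fun y => gradient (U t) y)
        = fun y => kappaL (EuclideanSpace ℝ (Fin n)) (ℓ (t, y)) := funext fun y => hgradeq t y
    rw [h2]
    exact h1
  have hAeq : ∀ t : ℝ, fderiv ℝ (fun y => gradient (U t) y) (ybar t)
      = (kappaL (EuclideanSpace ℝ (Fin n))).comp ((fderiv ℝ ℓ (t, ybar t)).comp
        (ContinuousLinearMap.inr ℝ ℝ (EuclideanSpace ℝ (Fin n)))) := fun t => (hAhas t).fderiv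
  have hAapp : ∀ (t : ℝ) (v w : EuclideanSpace ℝ (Fin n)),
      ⟪fderiv ℝ (fun y => gradient (U t) y) (ybar t) v, w⟫
        = fderiv ℝ ℓ (t, ybar t) (0, v) w := by
    intro t v w
    rw [hAeq t]
    exact inner_kappaL _ w
  -- second derivative and its symmetry
  have hD2sym : ∀ (q : ℝ × EuclideanSpace ℝ (Fin n)) v w,
      fderiv ℝ (fderiv ℝ (fun q : ℝ × EuclideanSpace ℝ (Fin n) => U q.1 q.2)) q v w
        = fderiv ℝ (fderiv ℝ (fun q : ℝ × EuclideanSpace ℝ (Fin n) => U q.1 q.2)) q w v :=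
    fun q => hU.contDiffAt.isSymmSndFDerivAt (by simp)
  have hDℓ : ∀ q : ℝ × EuclideanSpace ℝ (Fin n), fderiv ℝ ℓ q
      = rc.comp (fderiv ℝ (fderiv ℝ (fun q : ℝ × EuclideanSpace ℝ (Fin n) => U q.1 q.2)) q) := by
    intro q
    exact (rc.hasFDerivAt.comp q ((hC1.differentiable one_ne_zero q).hasFDerivAt)).fderiv
  have hDℓapp : ∀ (q : ℝ × EuclideanSpace ℝ (Fin n)) (w : ℝ × EuclideanSpace ℝ (Fin n))
      (v : EuclideanSpace ℝ (Fin n)), fderiv ℝ ℓ q w v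
        = fderiv ℝ (fderiv ℝ (fun q : ℝ × EuclideanSpace ℝ (Fin n) => U q.1 q.2)) q w (0, v) := by
    intro q w v
    rw [hDℓ q]
    rfl
  -- Λ helpers
  have hΛd : Differentiable ℝ (fun p : EuclideanSpace ℝ (Fin n) × ℝ => Λ p.1 p.2) :=
    hΛ.differentiable one_ne_zero
  have hGis : ∀ (y v : EuclideanSpace ℝ (Fin n)),
      ⟪gradient (fun y => Λ y 1) y, v⟫
        = fderiv ℝ (fun p : EuclideanSpace ℝ (Fin n) × ℝ => Λ p.1 p.2) (y, 1) (v, 0) := by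
    intro y v
    have h1 : HasFDerivAt (fun y' => Λ y' 1)
        ((fderiv ℝ (fun p : EuclideanSpace ℝ (Fin n) × ℝ => Λ p.1 p.2) (y, 1)).comp
          (ContinuousLinearMap.inl ℝ (EuclideanSpace ℝ (Fin n)) ℝ)) y := by
      have h := (hΛd (y, 1)).hasFDerivAt.comp y (hasFDerivAt_prodMk_left (𝕜 := ℝ) y (1:ℝ))
      exact h
    rw [gradient_eq_kappaL, inner_kappaL, h1.fderiv]
    rfl
  have hdΛis : ∀ y : EuclideanSpace ℝ (Fin n), deriv (Λ y) 1
      = fderiv ℝ (fun p : EuclideanSpace ℝ (Fin n) × ℝ => Λ p.1 p.2) (y, 1) (0, 1) := by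
    intro y
    have h1 : HasDerivAt (fun s => Λ y s)
        (fderiv ℝ (fun p : EuclideanSpace ℝ (Fin n) × ℝ => Λ p.1 p.2) (y, 1) (0, 1)) 1 :=
      (hΛd (y, 1)).hasFDerivAt.comp_hasDerivAt 1 ((hasDerivAt_const 1 y).prodMk (hasDerivAt_id 1))
    exact h1.deriv
  -- derivative of η in y at the concentration point
  have hψ := PopAux.psi_hasFDerivAt M hMmeas hMnn hMexp
  have hA' : ∀ t : ℝ, HasFDerivAt (fun y => gradient (U t) y)
      (fderiv ℝ (fun y => gradient (U t) y) (ybar t)) (ybar t) := by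
    intro t
    rw [hAeq t]
    exact hAhas t
  have hηdiff : ∀ t ∈ Icc (0:ℝ) T, HasFDerivAt (η t)
      ((innerSL ℝ (∫ z, M z • z)).comp (fderiv ℝ (fun y => gradient (U t) y) (ybar t)))
      (ybar t) := by
    intro t ht
    have h0 : HasFDerivAt (fun p : EuclideanSpace ℝ (Fin n) => ∫ z, M z * Real.exp ⟪p, z⟫)
        (innerSL ℝ (∫ z, M z • z)) (gradient (U t) (ybar t)) := by
      rw [hcrit t ht]; exact hψ
    have h1 := h0.comp (ybar t) (hA' t)
    have h2 : η t = fun y => ∫ z, M z * Real.exp ⟪gradient (U t) y, z⟫ := funext fun y => hη t y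
    rw [h2]
    exact h1
  -- the key identity (canonical equation tested against vectors)
  have key : ∀ t ∈ Icc (0:ℝ) T, ∀ v : EuclideanSpace ℝ (Fin n),
      ⟪fderiv ℝ (fun y => gradient (U t) y) (ybar t) (ybar' t), v⟫
        = ⟪gradient (fun y => Λ y 1) (ybar t), v⟫
          + deriv (Λ (ybar t)) 1 *
            ⟪(∫ z, M z • z), fderiv ℝ (fun y => gradient (U t) y) (ybar t) v⟫ := by
    intro t ht v
    have hcurve : HasDerivWithinAt (fun s : ℝ => ((s : ℝ), ybar s)) (1, ybar' t) (Icc 0 T) t :=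
      (hasDerivWithinAt_id t _).prodMk (hybar t ht)
    have hΨ : HasDerivWithinAt (fun s => ℓ (s, ybar s))
        (fderiv ℝ ℓ (t, ybar t) (1, ybar' t)) (Icc 0 T) t := by
      have h := ((hℓd (t, ybar t)).hasFDerivAt).comp_hasDerivWithinAt t hcurve
      exact h
    have hΨ0 : HasDerivWithinAt (fun s => ℓ (s, ybar s)) 0 (Icc 0 T) t :=
      (hasDerivWithinAt_const t _ 0).congr (fun s hs => hℓ0 s hs) (hℓ0 t ht)
    have hzero : fderiv ℝ ℓ (t, ybar t) (1, ybar' t) = 0 := by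
      have e1 := hΨ.derivWithin (uniqueDiffOn_Icc hT t ht)
      have e2 := hΨ0.derivWithin (uniqueDiffOn_Icc hT t ht)
      rw [← e1, e2]
    have hmix : ∀ w : EuclideanSpace ℝ (Fin n),
        fderiv ℝ (fderiv ℝ (fun q : ℝ × EuclideanSpace ℝ (Fin n) => U q.1 q.2)) (t, ybar t)
            (1, 0) (0, w)
          + fderiv ℝ (fderiv ℝ (fun q : ℝ × EuclideanSpace ℝ (Fin n) => U q.1 q.2)) (t, ybar t)
            (0, ybar' t) (0, w) = 0 := by
      intro w
      have e3 : fderiv ℝ ℓ (t, ybar t) (1, ybar' t) w = 0 := by rw [hzero]; rfl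
      rw [hDℓapp] at e3
      have e4 : ((1:ℝ), ybar' t) = ((1:ℝ), (0 : EuclideanSpace ℝ (Fin n)))
          + ((0:ℝ), ybar' t) := by simp
      rw [e4, map_add, ContinuousLinearMap.add_apply] at e3
      exact e3
    -- mixed partial derivative via the HJ equation
    have hmixedfd : HasFDerivAt (fun y => deriv (fun s => U s y) t)
        ((ContinuousLinearMap.apply ℝ ℝ ((1:ℝ), (0 : EuclideanSpace ℝ (Fin n)))).comp
          ((fderiv ℝ (fderiv ℝ (fun q : ℝ × EuclideanSpace ℝ (Fin n) => U q.1 q.2))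
            (t, ybar t)).comp (ContinuousLinearMap.inr ℝ ℝ (EuclideanSpace ℝ (Fin n)))))
        (ybar t) := by
      have h1 : (fun y => deriv (fun s => U s y) t)
          = fun y => (ContinuousLinearMap.apply ℝ ℝ ((1:ℝ), (0 : EuclideanSpace ℝ (Fin n))))
              (fderiv ℝ (fun q : ℝ × EuclideanSpace ℝ (Fin n) => U q.1 q.2) (t, y)) :=
        funext fun y => by rw [(hUts t y).deriv]; rfl
      rw [h1]
      exact (ContinuousLinearMap.apply ℝ ℝ _).hasFDerivAt.comp _
        ((hC1.differentiable one_ne_zero (t, ybar t)).hasFDerivAt.comp _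
          (hasFDerivAt_prodMk_right t (ybar t)))
    have hkd : HasFDerivAt (fun y => Λ y (η t y))
        ((fderiv ℝ (fun p : EuclideanSpace ℝ (Fin n) × ℝ => Λ p.1 p.2) (ybar t, 1)).comp
          ((ContinuousLinearMap.id ℝ (EuclideanSpace ℝ (Fin n))).prod
            ((innerSL ℝ (∫ z, M z • z)).comp
              (fderiv ℝ (fun y => gradient (U t) y) (ybar t))))) (ybar t) := by
      have hpair : HasFDerivAt (fun y : EuclideanSpace ℝ (Fin n) => (y, η t y))
          ((ContinuousLinearMap.id ℝ (EuclideanSpace ℝ (Fin n))).prod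
            ((innerSL ℝ (∫ z, M z • z)).comp
              (fderiv ℝ (fun y => gradient (U t) y) (ybar t)))) (ybar t) :=
        (hasFDerivAt_id (ybar t)).prodMk (hηdiff t ht)
      have h6 := ((hΛd ((ybar t), η t (ybar t))).hasFDerivAt).comp (ybar t) hpair
      rw [hη1 t ht] at h6
      exact h6
    have hHJfun : (fun y => deriv (fun s => U s y) t) = fun y => -Λ y (η t y) :=
      funext fun y => hHJ t ht y
    have hnegfd : HasFDerivAt (fun y => deriv (fun s => U s y) t)
        (-((fderiv ℝ (fun p : EuclideanSpace ℝ (Fin n) × ℝ => Λ p.1 p.2) (ybar t, 1)).comp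
          ((ContinuousLinearMap.id ℝ (EuclideanSpace ℝ (Fin n))).prod
            ((innerSL ℝ (∫ z, M z • z)).comp
              (fderiv ℝ (fun y => gradient (U t) y) (ybar t)))))) (ybar t) := by
      rw [hHJfun]
      exact hkd.neg
    have huniq2 := hmixedfd.unique hnegfd
    -- evaluate both CLMs at v
    have e5 := congrArg (fun (B : EuclideanSpace ℝ (Fin n) →L[ℝ] ℝ) => B v) huniq2
    simp only [ContinuousLinearMap.coe_comp', Function.comp_apply,
      ContinuousLinearMap.neg_apply] at e5
    -- e5 : D2 (0,v) (1,0) = -(DΛ (v, ⟪m, A v⟫))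
    have e6 : fderiv ℝ (fderiv ℝ (fun q : ℝ × EuclideanSpace ℝ (Fin n) => U q.1 q.2))
        (t, ybar t) (0, v) ((1:ℝ), (0 : EuclideanSpace ℝ (Fin n)))
        = -(fderiv ℝ (fun p : EuclideanSpace ℝ (Fin n) × ℝ => Λ p.1 p.2) (ybar t, 1)
            (v, ⟪(∫ z, M z • z), fderiv ℝ (fun y => gradient (U t) y) (ybar t) v⟫)) := e5
    have e7 : (v, (⟪(∫ z, M z • z), fderiv ℝ (fun y => gradient (U t) y) (ybar t) v⟫ : ℝ))
        = (v, (0:ℝ)) + ⟪(∫ z, M z • z), fderiv ℝ (fun y => gradient (U t) y) (ybar t) v⟫ •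
            ((0 : EuclideanSpace ℝ (Fin n)), (1:ℝ)) := by
      simp
    calc ⟪fderiv ℝ (fun y => gradient (U t) y) (ybar t) (ybar' t), v⟫
        = fderiv ℝ ℓ (t, ybar t) (0, ybar' t) v := hAapp t (ybar' t) v
      _ = fderiv ℝ (fderiv ℝ (fun q : ℝ × EuclideanSpace ℝ (Fin n) => U q.1 q.2)) (t, ybar t)
            (0, ybar' t) (0, v) := hDℓapp _ _ v
      _ = -(fderiv ℝ (fderiv ℝ (fun q : ℝ × EuclideanSpace ℝ (Fin n) => U q.1 q.2)) (t, ybar t)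
            (1, 0) (0, v)) := by linarith [hmix v]
      _ = -(fderiv ℝ (fderiv ℝ (fun q : ℝ × EuclideanSpace ℝ (Fin n) => U q.1 q.2)) (t, ybar t)
            (0, v) (1, 0)) := by rw [hD2sym]
      _ = fderiv ℝ (fun p : EuclideanSpace ℝ (Fin n) × ℝ => Λ p.1 p.2) (ybar t, 1)
            (v, ⟪(∫ z, M z • z), fderiv ℝ (fun y => gradient (U t) y) (ybar t) v⟫) := by
          rw [e6]; ring
      _ = ⟪gradient (fun y => Λ y 1) (ybar t), v⟫
            + deriv (Λ (ybar t)) 1 *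
              ⟪(∫ z, M z • z), fderiv ℝ (fun y => gradient (U t) y) (ybar t) v⟫ := by
          rw [e7, map_add, _root_.map_smul, smul_eq_mul, hGis (ybar t) v, hdΛis (ybar t)]
          ring
  -- symmetry of the Hessian map
  have hsymA : ∀ (t : ℝ) (v w : EuclideanSpace ℝ (Fin n)),
      ⟪fderiv ℝ (fun y => gradient (U t) y) (ybar t) v, w⟫
        = ⟪fderiv ℝ (fun y => gradient (U t) y) (ybar t) w, v⟫ := by
    intro t v w
    rw [hAapp t v w, hAapp t w v, hDℓapp, hDℓapp, hD2sym]
  -- inverse property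
  have hAinv : ∀ t ∈ Icc (0:ℝ) T, ∀ x : EuclideanSpace ℝ (Fin n),
      fderiv ℝ (fun y => gradient (U t) y) (ybar t)
        (Ring.inverse (fderiv ℝ (fun y => gradient (U t) y) (ybar t)) x) = x := by
    intro t ht x
    have hu := hinv t ht
    calc fderiv ℝ (fun y => gradient (U t) y) (ybar t)
          (Ring.inverse (fderiv ℝ (fun y => gradient (U t) y) (ybar t)) x)
        = ((fderiv ℝ (fun y => gradient (U t) y) (ybar t))
            * Ring.inverse (fderiv ℝ (fun y => gradient (U t) y) (ybar t))) x := rfl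
      _ = x := by rw [Ring.mul_inverse_cancel _ hu]; rfl
  -- the main inner-product identity for the derivative of ρ
  have hGid : ∀ t ∈ Icc (0:ℝ) T,
      ⟪gradient (fun y => Λ y 1) (ybar t), ybar' t⟫
        = ⟪gradient (fun y => Λ y 1) (ybar t),
            Ring.inverse (fderiv ℝ (fun y => gradient (U t) y) (ybar t))
              (gradient (fun y => Λ y 1) (ybar t))⟫
          + deriv (Λ (ybar t)) 1 *
            ⟪(∫ z, M z • z), gradient (fun y => Λ y 1) (ybar t)⟫ := by
    intro t ht
    have k1 := key t ht (Ring.inverse (fderiv ℝ (fun y => gradient (U t) y) (ybar t))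
      (gradient (fun y => Λ y 1) (ybar t)))
    rw [hAinv t ht (gradient (fun y => Λ y 1) (ybar t))] at k1
    rw [hsymA t (ybar' t) _, hAinv t ht (gradient (fun y => Λ y 1) (ybar t))] at k1
    exact k1
  -- derivative of ρ within Icc
  have hρd : ∀ t ∈ Icc (0:ℝ) T, HasDerivWithinAt ρ
      (-(fderiv ℝ (fun p : EuclideanSpace ℝ (Fin n) × ℝ => Λ p.1 p.2) (ybar t, 1)
        (ybar' t, 0))) (Icc 0 T) t := by
    intro t ht
    have h1 : HasDerivWithinAt (fun s => Λ (ybar s) 1)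
        (fderiv ℝ (fun p : EuclideanSpace ℝ (Fin n) × ℝ => Λ p.1 p.2) (ybar t, 1)
          (ybar' t, 0)) (Icc 0 T) t := by
      have h := (hΛd (ybar t, 1)).hasFDerivAt.comp_hasDerivWithinAt t
        ((hybar t ht).prodMk (hasDerivWithinAt_const t _ (1:ℝ)))
      exact h
    exact (h1.neg).congr (fun s hs => part1 s hs) (part1 t ht)
  -- continuity helpers
  have hybarc : ContinuousOn ybar (Icc 0 T) := fun s hs => (hybar s hs).continuousWithinAt
  have hΛ1 : ContDiff ℝ 1 (fun y : EuclideanSpace ℝ (Fin n) => Λ y 1) :=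
    hΛ.comp (contDiff_id.prodMk contDiff_const)
  have hGc : ContinuousOn (fun t => gradient (fun y => Λ y 1) (ybar t)) (Icc 0 T) := by
    have c1 : Continuous (fun y : EuclideanSpace ℝ (Fin n) =>
        kappaL (EuclideanSpace ℝ (Fin n)) (fderiv ℝ (fun y => Λ y 1) y)) :=
      (kappaL (EuclideanSpace ℝ (Fin n))).continuous.comp (hΛ1.continuous_fderiv one_ne_zero)
    exact (c1.comp_continuousOn hybarc).congr fun t _ => gradient_eq_kappaL _ _
  have hAc : ContinuousOn
      (fun t => fderiv ℝ (fun y => gradient (U t) y) (ybar t)) (Icc 0 T) := by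
    have c2 : ContinuousOn (fun t : ℝ => (kappaL (EuclideanSpace ℝ (Fin n))).comp
        ((fderiv ℝ ℓ (t, ybar t)).comp
          (ContinuousLinearMap.inr ℝ ℝ (EuclideanSpace ℝ (Fin n))))) (Icc 0 T) := by
      refine continuousOn_const.clm_comp (ContinuousOn.clm_comp ?_ continuousOn_const)
      exact (hℓC1.continuous_fderiv one_ne_zero).comp_continuousOn (continuousOn_id.prodMk hybarc)
    exact c2.congr fun t _ => hAeq t
  have hRic : ContinuousOn (fun t => Ring.inverse
      (fderiv ℝ (fun y => gradient (U t) y) (ybar t))) (Icc 0 T) := by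
    intro t ht
    have hu := hinv t ht
    have hc := NormedRing.inverse_continuousAt hu.unit
    rw [hu.unit_spec] at hc
    exact ContinuousAt.comp_continuousWithinAt (g := Ring.inverse) hc (hAc t ht)
  have hdΛc : ContinuousOn (fun t => deriv (Λ (ybar t)) 1) (Icc 0 T) := by
    have c3 : ContinuousOn (fun t : ℝ =>
        fderiv ℝ (fun p : EuclideanSpace ℝ (Fin n) × ℝ => Λ p.1 p.2) (ybar t, 1)
          ((0 : EuclideanSpace ℝ (Fin n)), (1:ℝ))) (Icc 0 T) :=
      ContinuousOn.clm_apply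
        ((hΛ.continuous_fderiv one_ne_zero).comp_continuousOn (hybarc.prodMk continuousOn_const))
        continuousOn_const
    exact c3.congr fun t _ => hdΛis (ybar t)
  refine ⟨part1, fun t =>
      -⟪gradient (fun y => Λ y 1) (ybar t),
          (Ring.inverse (fderiv ℝ (fun y => gradient (U t) y) (ybar t)))
            (gradient (fun y => Λ y 1) (ybar t))⟫
        - deriv (Λ (ybar t)) 1 *
            ⟪∫ z, M z • z, gradient (fun y => Λ y 1) (ybar t)⟫, ?_, fun t ht => ⟨?_, rfl⟩, ?_⟩
  · -- continuity of ρ'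
    exact ((hGc.inner (hRic.clm_apply hGc)).neg).sub
      (hdΛc.mul (continuousOn_const.inner hGc))
  · -- HasDerivWithinAt
    have hval : -⟪gradient (fun y => Λ y 1) (ybar t),
          (Ring.inverse (fderiv ℝ (fun y => gradient (U t) y) (ybar t)))
            (gradient (fun y => Λ y 1) (ybar t))⟫
        - deriv (Λ (ybar t)) 1 * ⟪∫ z, M z • z, gradient (fun y => Λ y 1) (ybar t)⟫
        = -(fderiv ℝ (fun p : EuclideanSpace ℝ (Fin n) × ℝ => Λ p.1 p.2) (ybar t, 1)
          (ybar' t, 0)) := by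
      rw [← hGis (ybar t) (ybar' t)]
      linarith [hGid t ht]
    show HasDerivWithinAt ρ
      (-⟪gradient (fun y => Λ y 1) (ybar t),
          (Ring.inverse (fderiv ℝ (fun y => gradient (U t) y) (ybar t)))
            (gradient (fun y => Λ y 1) (ybar t))⟫
        - deriv (Λ (ybar t)) 1 *
            ⟪∫ z, M z • z, gradient (fun y => Λ y 1) (ybar t)⟫) (Icc 0 T) t
    rw [hval]
    exact hρd t ht
  · -- monotonicity under evenness and negative definiteness
    rintro ⟨hm0, hneg⟩ t ht
    have h8 : ⟪(∫ z, M z • z), gradient (fun y => Λ y 1) (ybar t)⟫ = (0:ℝ) := by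
      rw [hm0]
      exact inner_zero_left _
    have h9 : ⟪gradient (fun y => Λ y 1) (ybar t),
        Ring.inverse (fderiv ℝ (fun y => gradient (U t) y) (ybar t))
          (gradient (fun y => Λ y 1) (ybar t))⟫ ≤ 0 := by
      by_cases hw : Ring.inverse (fderiv ℝ (fun y => gradient (U t) y) (ybar t))
          (gradient (fun y => Λ y 1) (ybar t)) = 0
      · rw [hw, inner_zero_right]
      · have h10 := hneg t ht _ hw
        rw [hAinv t ht (gradient (fun y => Λ y 1) (ybar t))] at h10
        exact h10.le
    show (0:ℝ) ≤ -⟪gradient (fun y => Λ y 1) (ybar t),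
          (Ring.inverse (fderiv ℝ (fun y => gradient (U t) y) (ybar t)))
            (gradient (fun y => Λ y 1) (ybar t))⟫
        - deriv (Λ (ybar t)) 1 *
            ⟪∫ z, M z • z, gradient (fun y => Λ y 1) (ybar t)⟫
    rw [h8, mul_zero, sub_zero]
    linarith [h9]
end
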